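/- arXiv:2601.22897 — 7 statements merged into one kernel-verified Lean document; each statement's English description precedes it below -/
import Mathlib

section
/- Let X be an n×p real matrix with XᵀX = I_p, let y ∈ ℝⁿ with y ≠ 0 and Xᵀy = 0, and let u ∈ ℝ^p be any nonzero vector. Then the matrix H = y uᵀ satisfies XᵀH = 0 (H is horizontal), and the Riemannian Hessian quadratic form of the variable-projection cost at X evaluated at H equals tr(Hᵀ(−(I_n − XXᵀ) y yᵀ H + H (Xᵀ y yᵀ X))) = −‖y‖₂⁴ ‖u‖₂² < 0. In particular, any critical point X with y orthogonal to the column span of X admits a direction of strictly negative curvature and is not a local minimum. -/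
open Matrix

lemma horiz_aux {n p q : ℕ} (X : Matrix (Fin n) (Fin p) ℝ)
    (y : Fin n → ℝ) (hXy : Xᵀ.mulVec y = 0) (v : Fin q → ℝ) :
    Xᵀ * vecMulVec y v = 0 := by
  ext i j
  have h := congrFun hXy i
  simp only [mulVec, dotProduct, Pi.zero_apply] at h
  simp only [mul_apply, vecMulVec_apply, Matrix.zero_apply]
  calc ∑ k, Xᵀ i k * (y k * v j) = (∑ k, Xᵀ i k * y k) * v j := by
        rw [Finset.sum_mul]; exact Finset.sum_congr rfl fun k _ => by ring
    _ = 0 := by rw [h, zero_mul]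

/-- at a critical point of VarPro with `Xᵀy = 0`, the direction `H = y uᵀ`
is horizontal and the Riemannian Hessian quadratic form at `H` equals `−‖y‖⁴‖u‖² < 0`. -/
theorem stmt_1 {n p : ℕ} (X : Matrix (Fin n) (Fin p) ℝ) (hX : Xᵀ * X = 1)
    (y : Fin n → ℝ) (hy : y ≠ 0) (hXy : Xᵀ.mulVec y = 0)
    (u : Fin p → ℝ) (hu : u ≠ 0) :
    Xᵀ * vecMulVec y u = 0 ∧
    trace ((vecMulVec y u)ᵀ *
        (-((1 - X * Xᵀ) * vecMulVec y y * vecMulVec y u) +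
          vecMulVec y u * (Xᵀ * vecMulVec y y * X))) =
      -((∑ i, (y i) ^ 2) ^ 2 * ∑ j, (u j) ^ 2) ∧
    trace ((vecMulVec y u)ᵀ *
        (-((1 - X * Xᵀ) * vecMulVec y y * vecMulVec y u) +
          vecMulVec y u * (Xᵀ * vecMulVec y y * X))) < 0 := by
  have h1 : Xᵀ * vecMulVec y u = 0 := horiz_aux X y hXy u
  have h2 : Xᵀ * vecMulVec y y = 0 := horiz_aux X y hXy y
  have hproj : (1 - X * Xᵀ) * vecMulVec y y = vecMulVec y y := by
    rw [sub_mul, one_mul, Matrix.mul_assoc, h2, Matrix.mul_zero, sub_zero]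
  have hvv : vecMulVec y y * vecMulVec y u = (∑ i, (y i) ^ 2) • vecMulVec y u := by
    ext i j
    simp only [mul_apply, vecMulVec_apply, Matrix.smul_apply, smul_eq_mul]
    rw [Finset.sum_mul]
    exact Finset.sum_congr rfl fun k _ => by ring
  have hzero : vecMulVec y u * (Xᵀ * vecMulVec y y * X) = 0 := by
    rw [h2, Matrix.zero_mul, Matrix.mul_zero]
  have htr : trace ((vecMulVec y u)ᵀ * vecMulVec y u)
      = (∑ i, (y i) ^ 2) * ∑ j, (u j) ^ 2 := by
    simp only [trace, diag_apply, mul_apply, transpose_apply, vecMulVec_apply]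
    rw [Finset.sum_mul]
    rw [Finset.sum_comm]
    refine Finset.sum_congr rfl fun i _ => ?_
    rw [Finset.sum_congr rfl (fun j _ => show (y i * u j) * (y i * u j) = y i ^ 2 * u j ^ 2 from by ring), ← Finset.mul_sum]
  have key : trace ((vecMulVec y u)ᵀ *
        (-((1 - X * Xᵀ) * vecMulVec y y * vecMulVec y u) +
          vecMulVec y u * (Xᵀ * vecMulVec y y * X))) =
      -((∑ i, (y i) ^ 2) ^ 2 * ∑ j, (u j) ^ 2) := by
    rw [hproj, hvv, hzero, add_zero, Matrix.mul_neg, trace_neg,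
      Matrix.mul_smul, trace_smul, smul_eq_mul, htr]
    ring
  have hs : 0 < ∑ i, (y i) ^ 2 := by
    obtain ⟨i, hi⟩ := Function.ne_iff.mp hy
    exact Finset.sum_pos' (fun k _ => sq_nonneg _)
      ⟨i, Finset.mem_univ i, by simpa using sq_pos_of_ne_zero hi⟩
  have ht : 0 < ∑ j, (u j) ^ 2 := by
    obtain ⟨j, hj⟩ := Function.ne_iff.mp hu
    exact Finset.sum_pos' (fun k _ => sq_nonneg _)
      ⟨j, Finset.mem_univ j, by simpa using sq_pos_of_ne_zero hj⟩
  have hfin : 0 < (∑ i, (y i) ^ 2) ^ 2 * ∑ j, (u j) ^ 2 := mul_pos (pow_pos hs 2) ht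
  exact ⟨h1, key, key ▸ by linarith⟩
end

section
/- Let Θ be an open subset of ℝ^m, let X : Θ → ℝ^{n×p} be twice differentiable with X(θ)ᵀX(θ) = I_p, let y ∈ ℝⁿ, and let G(θ) = ½‖(I_n − X(θ)X(θ)ᵀ)y‖². Let θ be a critical point of G at which the residual r = (I_n − XXᵀ)y is orthogonal to every column of every matrix dX(θ)[dθ], assume X(θ)ᵀ dX(θ)[dθ] = 0 for all dθ, and assume the injectivity condition that there exists C > 0 with ‖dX(θ)[dθ] z‖₂ ≥ C ‖z‖₂ ‖dθ‖₂ for all z ∈ ℝ^p and dθ ∈ ℝ^m. Setting v = X(θ)ᵀ y, the second-order quadratic form Q(dθ) = ⟨dX(θ)[dθ], Hess F(X)[dX(θ)[dθ]]⟩ + ⟨grad F(X), d²X(θ)[dθ,dθ]⟩ satisfies Q(dθ) ≥ (C² − ‖r‖₂ ‖d²X(θ)‖_op / ‖v‖₂) ‖v‖₂² ‖dθ‖₂² for all dθ. In particular, if ‖r‖₂ < C² ‖v‖₂ / ‖d²X(θ)‖_op and v ≠ 0, then Q is positive definite and θ is a local minimum of G. -/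
open Matrix Filter Asymptotics Topology

attribute [local instance] Matrix.frobeniusNormedAddCommGroup Matrix.frobeniusNormedSpace

theorem my_taylor2 {E F : Type*} [NormedAddCommGroup E] [NormedSpace ℝ E]
    [NormedAddCommGroup F] [NormedSpace ℝ F] {f : E → F} {x : E}
    (hf : ContDiffAt ℝ 2 f x) :
    (fun h => f (x + h) - f x - fderiv ℝ f x h -
        (2:ℝ)⁻¹ • fderiv ℝ (fderiv ℝ f) x h h) =o[𝓝 0] fun h => ‖h‖ ^ 2 := by
  obtain ⟨u, hu, hfu⟩ : ∃ u ∈ 𝓝 x, ContDiffOn ℝ 2 f u :=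
    hf.contDiffOn le_rfl (by simp)
  obtain ⟨δ, hδpos, hball⟩ := Metric.mem_nhds_iff.1 hu
  set f'' := fderiv ℝ (fderiv ℝ f) x with hf''def
  have hsymm : ∀ a b : E, f'' a b = f'' b a := fun a b =>
    (hf.isSymmSndFDerivAt (by simp)).eq a b
  have hdiff : ∀ z ∈ Metric.ball x δ, DifferentiableAt ℝ f z := by
    intro z hz
    exact (((hfu.mono hball) z hz).contDiffAt
      ((Metric.isOpen_ball).mem_nhds hz)).differentiableAt two_ne_zero
  have hf' : HasFDerivAt (fderiv ℝ f) f'' x :=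
    (((hf.fderiv_right (m := 1) le_rfl).differentiableAt one_ne_zero)).hasFDerivAt
  rw [isLittleO_iff]
  intro ε hε
  have hlo := (hasFDerivAt_iff_isLittleO_nhds_zero.1 hf')
  rw [isLittleO_iff] at hlo
  obtain ⟨δ₁, hδ₁pos, hδ₁⟩ := Metric.eventually_nhds_iff.1 (hlo hε)
  have hδ₂pos : 0 < min δ δ₁ := lt_min hδpos hδ₁pos
  filter_upwards [Metric.ball_mem_nhds (0:E) hδ₂pos] with h hh
  rw [Metric.mem_ball, dist_zero_right] at hh
  -- mean value argument on s = closedBall 0 ‖h‖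
  set g : E → F := fun z => f (x + z) - fderiv ℝ f x z - (2:ℝ)⁻¹ • f'' z z with hgdef
  set g' : E → (E →L[ℝ] F) := fun z => fderiv ℝ f (x + z) - fderiv ℝ f x - f'' z with hg'def
  have hs : ∀ z ∈ Metric.closedBall (0:E) ‖h‖, HasFDerivAt g (g' z) z := by
    intro z hz
    rw [Metric.mem_closedBall, dist_zero_right] at hz
    have hzball : x + z ∈ Metric.ball x δ := by
      rw [Metric.mem_ball, dist_comm]
      calc dist x (x + z) = ‖z‖ := by simp
      _ ≤ ‖h‖ := hz
      _ < δ := lt_of_lt_of_le hh (min_le_left _ _)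
    have h1 : HasFDerivAt (fun w => f (x + w))
        ((fderiv ℝ f (x + z)).comp (ContinuousLinearMap.id ℝ E)) z := by
      refine HasFDerivAt.comp z ((hdiff _ hzball).hasFDerivAt) ?_
      simpa using (hasFDerivAt_id z).const_add x
    have h2 : HasFDerivAt (fun w : E => fderiv ℝ f x w) (fderiv ℝ f x) z :=
      (fderiv ℝ f x).hasFDerivAt
    have hb := isBoundedBilinearMap_apply (𝕜 := ℝ) (E := E) (F := F)
    have hp : HasFDerivAt (fun w : E => ((f'' w, w) : (E →L[ℝ] F) × E))
        (f''.prod (ContinuousLinearMap.id ℝ E)) z :=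
      (f''.hasFDerivAt).prodMk (hasFDerivAt_id z)
    have h3 : HasFDerivAt (fun w : E => f'' w w)
        ((hb.deriv (f'' z, z)).comp (f''.prod (ContinuousLinearMap.id ℝ E))) z := by
      exact HasFDerivAt.comp (f := fun w : E => ((f'' w, w) : (E →L[ℝ] F) × E))
        z (hb.hasFDerivAt (f'' z, z)) hp
    have h4 : HasFDerivAt g
        (((fderiv ℝ f (x + z)).comp (ContinuousLinearMap.id ℝ E) - fderiv ℝ f x)
          - (2:ℝ)⁻¹ • ((hb.deriv (f'' z, z)).comp (f''.prod (ContinuousLinearMap.id ℝ E)))) z :=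
      (h1.sub h2).sub (h3.const_smul ((2:ℝ)⁻¹))
    convert h4 using 1
    ext w
    simp only [hg'def, ContinuousLinearMap.coe_sub', Pi.sub_apply,
      ContinuousLinearMap.coe_comp', Function.comp_apply, ContinuousLinearMap.coe_id', id_eq,
      ContinuousLinearMap.coe_smul', Pi.smul_apply, ContinuousLinearMap.prod_apply,
      hb.deriv_apply]
    rw [hsymm w z]
    have : (2:ℝ)⁻¹ • (f'' z w + f'' z w) = f'' z w := by
      rw [← two_smul ℝ (f'' z w), smul_smul]; norm_num
    rw [this]
  have hbound : ∀ z ∈ Metric.closedBall (0:E) ‖h‖, ‖g' z‖ ≤ ε * ‖h‖ := by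
    intro z hz
    rw [Metric.mem_closedBall, dist_zero_right] at hz
    have hz1 : ‖fderiv ℝ f (x + z) - fderiv ℝ f x - f'' z‖ ≤ ε * ‖z‖ := by
      have : dist z 0 < δ₁ := by
        rw [dist_zero_right]
        exact lt_of_le_of_lt hz (lt_of_lt_of_le hh (min_le_right _ _))
      simpa using hδ₁ this
    calc ‖g' z‖ ≤ ε * ‖z‖ := hz1
    _ ≤ ε * ‖h‖ := by nlinarith [norm_nonneg z]
  have hmvt := (convex_closedBall (0:E) ‖h‖).norm_image_sub_le_of_norm_hasFDerivWithin_le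
    (fun z hz => (hs z hz).hasFDerivWithinAt) hbound
    (Metric.mem_closedBall_self (norm_nonneg h))
    (by rw [Metric.mem_closedBall, dist_zero_right])
  have := hmvt
  have h0 : g 0 = f x := by simp [hgdef]
  have hgh : g h - g 0 = f (x + h) - f x - fderiv ℝ f x h - (2:ℝ)⁻¹ • f'' h h := by
    rw [h0]; simp only [hgdef]; abel
  calc ‖f (x + h) - f x - fderiv ℝ f x h - (2:ℝ)⁻¹ • f'' h h‖
      = ‖g h - g 0‖ := by rw [hgh]
    _ ≤ ε * ‖h‖ * ‖h - 0‖ := this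
    _ = ε * ‖h‖ ^ 2 := by rw [sub_zero]; ring
    _ ≤ ε * ‖‖h‖ ^ 2‖ := by
        rw [Real.norm_eq_abs, abs_of_nonneg (by positivity)]

noncomputable def en {k : ℕ} (u : Fin k → ℝ) : ℝ := Real.sqrt (∑ i, u i ^ 2)

lemma en_nonneg {k : ℕ} (u : Fin k → ℝ) : 0 ≤ en u := Real.sqrt_nonneg _

lemma en_sq {k : ℕ} (u : Fin k → ℝ) : en u ^ 2 = ∑ i, u i ^ 2 :=
  Real.sq_sqrt (by positivity)

lemma dot_le_en {k : ℕ} (u w : Fin k → ℝ) : u ⬝ᵥ w ≤ en u * en w := by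
  have h := Finset.sum_mul_sq_le_sq_mul_sq Finset.univ u w
  calc u ⬝ᵥ w ≤ |∑ i, u i * w i| := le_abs_self _
    _ = Real.sqrt ((∑ i, u i * w i) ^ 2) := (Real.sqrt_sq_eq_abs _).symm
    _ ≤ Real.sqrt ((∑ i, u i ^ 2) * ∑ i, w i ^ 2) := Real.sqrt_le_sqrt h
    _ = en u * en w := Real.sqrt_mul (by positivity) _

lemma en_neg {k : ℕ} (u : Fin k → ℝ) : en (-u) = en u := by
  unfold en; congr 1; apply Finset.sum_congr rfl; intros; simp

lemma abs_dot_le_en {k : ℕ} (u w : Fin k → ℝ) : |u ⬝ᵥ w| ≤ en u * en w := by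
  rcases abs_cases (u ⬝ᵥ w) with ⟨he, _⟩ | ⟨he, _⟩
  · rw [he]; exact dot_le_en u w
  · rw [he]
    have := dot_le_en u (-w)
    rw [en_neg] at this
    simpa [dotProduct_neg] using this

lemma en_add_le {k : ℕ} (u w : Fin k → ℝ) : en (u + w) ≤ en u + en w := by
  have h1 : ∑ i, (u + w) i ^ 2 ≤ (en u + en w) ^ 2 := by
    have hd := dot_le_en u w
    have h2 : ∑ i, (u + w) i ^ 2 = (∑ i, u i ^ 2) + 2 * (u ⬝ᵥ w) + ∑ i, w i ^ 2 := by
      simp only [dotProduct, Pi.add_apply, Finset.mul_sum]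
      rw [← Finset.sum_add_distrib, ← Finset.sum_add_distrib]
      apply Finset.sum_congr rfl; intros; ring
    rw [h2, add_sq, en_sq, en_sq]
    nlinarith [en_nonneg u, en_nonneg w]
  calc en (u + w) ≤ Real.sqrt ((en u + en w) ^ 2) := Real.sqrt_le_sqrt h1
    _ = en u + en w := by
        exact Real.sqrt_sq (by have := en_nonneg u; have := en_nonneg w; linarith)

lemma frob_norm_eq {a b : ℕ} (A : Matrix (Fin a) (Fin b) ℝ) :
    ‖A‖ = Real.sqrt (∑ i, ∑ j, (A i j) ^ 2) := by
  rw [Matrix.frobenius_norm_def, ← Real.sqrt_eq_rpow]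
  congr 1
  apply Finset.sum_congr rfl; intro i _
  apply Finset.sum_congr rfl; intro j _
  rw [show ((2:ℝ)) = ((2:ℕ):ℝ) by norm_num, Real.rpow_natCast, Real.norm_eq_abs, sq_abs]

lemma en_mulVec_le {a b : ℕ} (A : Matrix (Fin a) (Fin b) ℝ) (z : Fin b → ℝ) :
    en (A.mulVec z) ≤ ‖A‖ * en z := by
  rw [frob_norm_eq]
  have h1 : ∑ i, (A.mulVec z i) ^ 2 ≤ (∑ i, ∑ j, (A i j) ^ 2) * ∑ j, z j ^ 2 := by
    rw [Finset.sum_mul]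
    apply Finset.sum_le_sum
    intro i _
    exact Finset.sum_mul_sq_le_sq_mul_sq Finset.univ (fun j => A i j) z
  calc en (A.mulVec z) ≤ Real.sqrt ((∑ i, ∑ j, (A i j) ^ 2) * ∑ j, z j ^ 2) :=
        Real.sqrt_le_sqrt h1
    _ = _ := Real.sqrt_mul (by positivity) _

lemma mul_vecMulVec {a b c : ℕ} (A : Matrix (Fin a) (Fin b) ℝ) (u : Fin b → ℝ)
    (w : Fin c → ℝ) : A * vecMulVec u w = vecMulVec (A.mulVec u) w := by
  ext i j
  simp only [Matrix.mul_apply, vecMulVec_apply, Matrix.mulVec, dotProduct,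
    Finset.sum_mul]
  apply Finset.sum_congr rfl; intros; ring

lemma vecMulVec_mul {a b c : ℕ} (u : Fin a → ℝ) (w : Fin b → ℝ)
    (A : Matrix (Fin b) (Fin c) ℝ) : vecMulVec u w * A = vecMulVec u (Aᵀ.mulVec w) := by
  ext i j
  simp only [Matrix.mul_apply, vecMulVec_apply, Matrix.mulVec, dotProduct,
    Matrix.transpose_apply, Finset.mul_sum]
  apply Finset.sum_congr rfl; intros; ring

lemma vecMulVec_transp {a b : ℕ} (u : Fin a → ℝ) (w : Fin b → ℝ) :
    (vecMulVec u w)ᵀ = vecMulVec w u := by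
  ext i j; simp [vecMulVec_apply, mul_comm]

lemma trace_transpose_mul_vecMulVec {a b : ℕ} (A : Matrix (Fin a) (Fin b) ℝ)
    (u : Fin a → ℝ) (w : Fin b → ℝ) :
    trace (Aᵀ * vecMulVec u w) = u ⬝ᵥ A.mulVec w := by
  simp only [Matrix.trace, Matrix.diag, Matrix.mul_apply, vecMulVec_apply,
    Matrix.transpose_apply, dotProduct, Matrix.mulVec, Finset.mul_sum]
  rw [Finset.sum_comm]
  apply Finset.sum_congr rfl; intro i _
  apply Finset.sum_congr rfl; intros; ring

lemma trace_vecMulVec_mul {a b : ℕ} (u : Fin a → ℝ) (w : Fin b → ℝ)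
    (A : Matrix (Fin b) (Fin a) ℝ) :
    trace (vecMulVec u w * A) = w ⬝ᵥ A.mulVec u := by
  simp only [Matrix.trace, Matrix.diag, Matrix.mul_apply, vecMulVec_apply,
    dotProduct, Matrix.mulVec, Finset.mul_sum]
  rw [Finset.sum_comm]
  apply Finset.sum_congr rfl; intro i _
  apply Finset.sum_congr rfl; intros; ring

lemma en_eq_zero_iff {k : ℕ} (u : Fin k → ℝ) : en u = 0 ↔ u = 0 := by
  constructor
  · intro h
    have h2 : ∑ i, u i ^ 2 = 0 := by
      have := en_sq u
      rw [h] at this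
      simpa using this.symm
    funext i
    have := (Finset.sum_eq_zero_iff_of_nonneg (fun i _ => sq_nonneg (u i))).1 h2 i
      (Finset.mem_univ i)
    exact pow_eq_zero_iff two_ne_zero |>.mp this
  · intro h; rw [h]; simp [en]

lemma dot_self_nonneg {k : ℕ} (u : Fin k → ℝ) : 0 ≤ u ⬝ᵥ u :=
  Finset.sum_nonneg fun i _ => mul_self_nonneg (u i)

lemma dot_self_eq {k : ℕ} (u : Fin k → ℝ) : u ⬝ᵥ u = ∑ i, u i ^ 2 := by
  simp [dotProduct, sq]

lemma dot_expand {k : ℕ} (u w : Fin k → ℝ) :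
    (u + w) ⬝ᵥ (u + w) = u ⬝ᵥ u + 2 * (u ⬝ᵥ w) + w ⬝ᵥ w := by
  rw [add_dotProduct, dotProduct_add, dotProduct_add,
    dotProduct_comm w u]
  ring

set_option maxHeartbeats 1000000 in
theorem aux_localmin {m n p : ℕ}
    (X : EuclideanSpace ℝ (Fin m) → Matrix (Fin n) (Fin p) ℝ)
    (y : Fin n → ℝ) (θ : EuclideanSpace ℝ (Fin m))
    (hC2 : ContDiffAt ℝ 2 X θ)
    (hXst1 : (X θ)ᵀ * X θ = 1)
    (C : ℝ) (hC : 0 < C)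
    (hinj : ∀ (z : Fin p → ℝ) (dθ : EuclideanSpace ℝ (Fin m)),
      Real.sqrt (∑ i, ((fderiv ℝ X θ dθ).mulVec z i) ^ 2) ≥
        C * Real.sqrt (∑ i, (z i) ^ 2) * ‖dθ‖)
    (r : Fin n → ℝ) (v : Fin p → ℝ)
    (hrdef : r = (1 - X θ * (X θ)ᵀ).mulVec y)
    (hvdef : v = (X θ)ᵀ.mulVec y)
    (hrvm : ∀ dθ : EuclideanSpace ℝ (Fin m), r ᵥ* (fderiv ℝ X θ dθ) = 0)
    (hhoriz : ∀ dθ : EuclideanSpace ℝ (Fin m), (X θ)ᵀ * fderiv ℝ X θ dθ = 0)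
    (hsv : 0 < en v)
    (hcoef : en r * ‖iteratedFDeriv ℝ 2 X θ‖ < C ^ 2 * en v) :
    IsLocalMin (fun θ' => (1 / 2) * ∑ i, ((1 - X θ' * (X θ')ᵀ).mulVec y i) ^ 2) θ := by
  set G : EuclideanSpace ℝ (Fin m) → ℝ :=
    fun θ' => (1 / 2) * ∑ i, ((1 - X θ' * (X θ')ᵀ).mulVec y i) ^ 2 with hGdef
  have hsr0 : 0 ≤ en r := en_nonneg r
  have hsv0 : 0 ≤ en v := hsv.le
  have hsy0 : 0 ≤ en y := en_nonneg y
  have hnX0 : 0 ≤ ‖X θ‖ := norm_nonneg _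
  have hnL0 : 0 ≤ (fderiv ℝ X θ).opNorm := ContinuousLinearMap.opNorm_nonneg _
  have hnB0 : 0 ≤ ‖iteratedFDeriv ℝ 2 X θ‖ := norm_nonneg _
  obtain ⟨c, hcc, hcpos⟩ : ∃ c : ℝ,
      c = C ^ 2 * en v ^ 2 - en r * ‖iteratedFDeriv ℝ 2 X θ‖ * en v ∧ 0 < c :=
    ⟨_, rfl, by nlinarith [hcoef, hsv]⟩
  obtain ⟨ε₀, hε₀pos, hε₀le⟩ : ∃ e₀ : ℝ, 0 < e₀ ∧ en r * en v * e₀ ≤ c / 8 := by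
    have hD : (0:ℝ) < 8 * (en r * en v + 1) := by nlinarith [mul_nonneg hsr0 hsv0]
    refine ⟨c / (8 * (en r * en v + 1)), div_pos hcpos hD, ?_⟩
    rw [← mul_div_assoc, div_le_div_iff₀ hD (by norm_num : (0:ℝ) < 8)]
    nlinarith [hcpos.le, mul_nonneg hsr0 hsv0]
  obtain ⟨KF, hKF⟩ : ∃ x : ℝ, x = 2⁻¹ * ‖iteratedFDeriv ℝ 2 X θ‖ + ε₀ := ⟨_, rfl⟩
  obtain ⟨KE, hKE⟩ : ∃ x : ℝ, x = (fderiv ℝ X θ).opNorm + KF := ⟨_, rfl⟩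
  obtain ⟨K0, hK0⟩ : ∃ x : ℝ,
      x = ‖X θ‖ * (fderiv ℝ X θ).opNorm * en y + (fderiv ℝ X θ).opNorm * en v := ⟨_, rfl⟩
  obtain ⟨K1, hK1⟩ : ∃ x : ℝ,
      x = (‖X θ‖ * en y + en v) * KF + KE ^ 2 * en y := ⟨_, rfl⟩
  obtain ⟨Kc, hKc⟩ : ∃ x : ℝ, x = KF * en r * KE * en y + K0 * K1 := ⟨_, rfl⟩
  have hKF0 : 0 ≤ KF := by
    rw [hKF]; nlinarith [hε₀pos.le]
  have hKE0 : 0 ≤ KE := by rw [hKE]; nlinarith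
  have hK00 : 0 ≤ K0 := by
    rw [hK0]
    exact add_nonneg (mul_nonneg (mul_nonneg hnX0 hnL0) hsy0) (mul_nonneg hnL0 hsv0)
  have hK10 : 0 ≤ K1 := by
    rw [hK1]
    exact add_nonneg (mul_nonneg (add_nonneg (mul_nonneg hnX0 hsy0) hsv0) hKF0)
      (mul_nonneg (pow_nonneg hKE0 2) hsy0)
  have hKc0 : 0 ≤ Kc := by
    rw [hKc]
    exact add_nonneg (mul_nonneg (mul_nonneg (mul_nonneg hKF0 hsr0) hKE0) hsy0)
      (mul_nonneg hK00 hK10)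
  obtain ⟨δ₃, hδ₃pos, hδ₃⟩ : ∃ d : ℝ, 0 < d ∧ Kc * d ≤ c / 8 := by
    have hD : (0:ℝ) < 8 * (Kc + 1) := by nlinarith
    refine ⟨c / (8 * (Kc + 1)), div_pos hcpos hD, ?_⟩
    rw [← mul_div_assoc, div_le_div_iff₀ hD (by norm_num : (0:ℝ) < 8)]
    nlinarith [hcpos.le]
  -- matrix facts at θ
  have hXr : (X θ)ᵀ *ᵥ r = 0 := by
    have hz : (X θ)ᵀ * (1 - X θ * (X θ)ᵀ) = 0 := by
      rw [Matrix.mul_sub, Matrix.mul_one, ← Matrix.mul_assoc, hXst1,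
        Matrix.one_mul, sub_self]
    rw [hrdef, Matrix.mulVec_mulVec, hz, Matrix.zero_mulVec]
  have hDr : ∀ u : EuclideanSpace ℝ (Fin m), (fderiv ℝ X θ u)ᵀ *ᵥ r = 0 := by
    intro u; rw [Matrix.mulVec_transpose]; exact hrvm u
  have hDX : ∀ u : EuclideanSpace ℝ (Fin m), (fderiv ℝ X θ u)ᵀ * X θ = 0 := by
    intro u
    have hh := congrArg Matrix.transpose (hhoriz u)
    rwa [Matrix.transpose_mul, Matrix.transpose_transpose, Matrix.transpose_zero] at hh
  have hinj2 : ∀ (z : Fin p → ℝ) (u : EuclideanSpace ℝ (Fin m)),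
      C ^ 2 * en z ^ 2 * ‖u‖ ^ 2 ≤ (fderiv ℝ X θ u *ᵥ z) ⬝ᵥ (fderiv ℝ X θ u *ᵥ z) := by
    intro z u
    have h1 : en (fderiv ℝ X θ u *ᵥ z) ≥ C * en z * ‖u‖ := hinj z u
    have h0 : 0 ≤ C * en z * ‖u‖ :=
      mul_nonneg (mul_nonneg hC.le (en_nonneg z)) (norm_nonneg u)
    have h3 := mul_le_mul h1 h1 h0 (en_nonneg _)
    calc C ^ 2 * en z ^ 2 * ‖u‖ ^ 2 = (C * en z * ‖u‖) * (C * en z * ‖u‖) := by ring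
      _ ≤ _ * _ := h3
      _ = en (fderiv ℝ X θ u *ᵥ z) ^ 2 := by ring
      _ = (fderiv ℝ X θ u *ᵥ z) ⬝ᵥ (fderiv ℝ X θ u *ᵥ z) := by
          rw [en_sq, dot_self_eq]
  -- Taylor expansion of X at θ
  have htay := my_taylor2 hC2
  rw [isLittleO_iff] at htay
  have hev1 := htay hε₀pos
  have hev2 : ∀ᶠ u : EuclideanSpace ℝ (Fin m) in 𝓝 0, ‖u‖ < 1 := by
    filter_upwards [Metric.ball_mem_nhds (0 : EuclideanSpace ℝ (Fin m)) one_pos] with u hu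
    rwa [Metric.mem_ball, dist_zero_right] at hu
  have hev3 : ∀ᶠ u : EuclideanSpace ℝ (Fin m) in 𝓝 0, ‖u‖ < δ₃ := by
    filter_upwards [Metric.ball_mem_nhds (0 : EuclideanSpace ℝ (Fin m)) hδ₃pos] with u hu
    rwa [Metric.mem_ball, dist_zero_right] at hu
  have hloc : ∀ᶠ u : EuclideanSpace ℝ (Fin m) in 𝓝 0, G θ ≤ G (θ + u) := by
    filter_upwards [hev1, hev2, hev3] with t het ht1 ht3
    have ht0 : (0:ℝ) ≤ ‖t‖ := norm_nonneg t
    -- definitions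
    obtain ⟨Em, hEm⟩ : ∃ E : Matrix (Fin n) (Fin p) ℝ, E = X (θ + t) - X θ := ⟨_, rfl⟩
    obtain ⟨et, het2⟩ : ∃ e : Matrix (Fin n) (Fin p) ℝ,
        e = Em - fderiv ℝ X θ t - (2:ℝ)⁻¹ • iteratedFDeriv ℝ 2 X θ ![t, t] := ⟨_, rfl⟩
    obtain ⟨F2, hF2⟩ : ∃ f : Matrix (Fin n) (Fin p) ℝ,
        f = (2:ℝ)⁻¹ • iteratedFDeriv ℝ 2 X θ ![t, t] + et := ⟨_, rfl⟩
    have hEmsplit : Em = fderiv ℝ X θ t + F2 := by rw [hF2, het2]; abel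
    have hBB : iteratedFDeriv ℝ 2 X θ ![t, t] = fderiv ℝ (fderiv ℝ X) θ t t := by
      rw [iteratedFDeriv_two_apply]
      simp
      rfl
    have hetn : ‖et‖ ≤ ε₀ * ‖t‖ ^ 2 := by
      have hrw2 : et = X (θ + t) - X θ - fderiv ℝ X θ t -
          (2:ℝ)⁻¹ • fderiv ℝ (fderiv ℝ X) θ t t := by rw [het2, hEm, hBB]
      rw [hrw2]
      calc _ ≤ ε₀ * ‖‖t‖ ^ 2‖ := het
        _ = ε₀ * ‖t‖ ^ 2 := by rw [Real.norm_eq_abs, abs_of_nonneg (sq_nonneg _)]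
    have hBmn : ‖iteratedFDeriv ℝ 2 X θ ![t, t]‖ ≤
        ‖iteratedFDeriv ℝ 2 X θ‖ * (‖t‖ * ‖t‖) := by
      simpa [Fin.prod_univ_two] using (iteratedFDeriv ℝ 2 X θ).le_opNorm ![t, t]
    have hF2n : ‖F2‖ ≤ KF * ‖t‖ ^ 2 := by
      rw [hF2]
      calc ‖(2:ℝ)⁻¹ • iteratedFDeriv ℝ 2 X θ ![t, t] + et‖ ≤
          ‖(2:ℝ)⁻¹ • iteratedFDeriv ℝ 2 X θ ![t, t]‖ + ‖et‖ := norm_add_le _ _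
        _ = 2⁻¹ * ‖iteratedFDeriv ℝ 2 X θ ![t, t]‖ + ‖et‖ := by
            rw [norm_smul]; norm_num
        _ ≤ 2⁻¹ * (‖iteratedFDeriv ℝ 2 X θ‖ * (‖t‖ * ‖t‖)) + ε₀ * ‖t‖ ^ 2 := by
            linarith
        _ = KF * ‖t‖ ^ 2 := by rw [hKF]; ring
    have hDmn : ‖fderiv ℝ X θ t‖ ≤ (fderiv ℝ X θ).opNorm * ‖t‖ :=
      (fderiv ℝ X θ).le_opNorm t
    have hEmn : ‖Em‖ ≤ KE * ‖t‖ := by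
      rw [hEmsplit]
      calc ‖fderiv ℝ X θ t + F2‖ ≤ ‖fderiv ℝ X θ t‖ + ‖F2‖ := norm_add_le _ _
        _ ≤ (fderiv ℝ X θ).opNorm * ‖t‖ + KF * ‖t‖ ^ 2 := by linarith
        _ ≤ (fderiv ℝ X θ).opNorm * ‖t‖ + KF * ‖t‖ := by
            nlinarith [mul_le_mul_of_nonneg_left ht1.le (mul_nonneg hKF0 ht0)]
        _ = KE * ‖t‖ := by rw [hKE]; ring
    -- the residual identity
    obtain ⟨w, hw⟩ : ∃ w : Fin n → ℝ,
        w = X θ *ᵥ (Emᵀ *ᵥ y) + Em *ᵥ v + Em *ᵥ (Emᵀ *ᵥ y) := ⟨_, rfl⟩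
    have hXA : X (θ + t) = X θ + Em := by rw [hEm]; abel
    have hrv : (1 - X (θ + t) * (X (θ + t))ᵀ) *ᵥ y = r - w := by
      have hAA : X (θ + t) * (X (θ + t))ᵀ =
          X θ * (X θ)ᵀ + (X θ * Emᵀ + Em * (X θ)ᵀ + Em * Emᵀ) := by
        rw [hXA, Matrix.transpose_add, Matrix.mul_add, Matrix.add_mul, Matrix.add_mul]
        abel
      have hr2 : r = y - X θ *ᵥ v := by
        rw [hrdef, hvdef, Matrix.sub_mulVec, Matrix.one_mulVec, Matrix.mulVec_mulVec]
      have hv' : (X θ)ᵀ *ᵥ y = v := hvdef.symm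
      rw [Matrix.sub_mulVec, Matrix.one_mulVec, hAA, Matrix.add_mulVec,
        Matrix.add_mulVec, Matrix.add_mulVec, ← Matrix.mulVec_mulVec,
        ← Matrix.mulVec_mulVec, ← Matrix.mulVec_mulVec, ← Matrix.mulVec_mulVec,
        hv', hw, hr2]
      abel
    -- scalar expansion
    have hG1 : G (θ + t) = (1/2) * ∑ i, ((r - w) i) ^ 2 := by
      simp only [hGdef]
      rw [hrv]
    have hG0 : G θ = (1/2) * ∑ i, (r i) ^ 2 := by
      simp only [hGdef]
      rw [hrdef]
    have hsum : ∑ i, ((r - w) i) ^ 2 =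
        (∑ i, (r i) ^ 2) - 2 * (r ⬝ᵥ w) + (w ⬝ᵥ w) := by
      have hterm : ∀ i, ((r - w) i) ^ 2 = (r i) ^ 2 - 2 * (r i * w i) + w i * w i := by
        intro i; simp only [Pi.sub_apply]; ring
      rw [Finset.sum_congr rfl (fun i _ => hterm i), Finset.sum_add_distrib,
        Finset.sum_sub_distrib, ← Finset.mul_sum]
      rfl
    have hΔ : G (θ + t) - G θ = -(r ⬝ᵥ w) + (1/2) * (w ⬝ᵥ w) := by
      rw [hG1, hG0, hsum]; ring
    -- bound r ⬝ᵥ w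
    have hrw : r ⬝ᵥ w = r ⬝ᵥ (Em *ᵥ v) + (Emᵀ *ᵥ r) ⬝ᵥ (Emᵀ *ᵥ y) := by
      rw [hw, dotProduct_add, dotProduct_add]
      have z1 : r ⬝ᵥ (X θ *ᵥ (Emᵀ *ᵥ y)) = 0 := by
        rw [Matrix.dotProduct_mulVec, ← Matrix.mulVec_transpose, hXr,
          zero_dotProduct]
      have z2 : r ⬝ᵥ (Em *ᵥ (Emᵀ *ᵥ y)) = (Emᵀ *ᵥ r) ⬝ᵥ (Emᵀ *ᵥ y) := by
        rw [Matrix.dotProduct_mulVec, ← Matrix.mulVec_transpose]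
      rw [z1, z2]; ring
    have z3 : r ⬝ᵥ (Em *ᵥ v) = r ⬝ᵥ (F2 *ᵥ v) := by
      rw [hEmsplit, Matrix.add_mulVec, dotProduct_add,
        Matrix.dotProduct_mulVec, hrvm t, zero_dotProduct, zero_add]
    have e2 : |r ⬝ᵥ (F2 *ᵥ v)| ≤ en r * (KF * ‖t‖ ^ 2 * en v) := by
      calc |r ⬝ᵥ (F2 *ᵥ v)| ≤ en r * en (F2 *ᵥ v) := abs_dot_le_en _ _
        _ ≤ en r * (‖F2‖ * en v) :=
            mul_le_mul_of_nonneg_left (en_mulVec_le _ _) hsr0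
        _ ≤ en r * (KF * ‖t‖ ^ 2 * en v) :=
            mul_le_mul_of_nonneg_left
              (mul_le_mul_of_nonneg_right hF2n (en_nonneg v)) hsr0
    have z4 : Emᵀ *ᵥ r = F2ᵀ *ᵥ r := by
      rw [hEmsplit, Matrix.transpose_add, Matrix.add_mulVec, hDr t, zero_add]
    have b1 : en (F2ᵀ *ᵥ r) ≤ KF * ‖t‖ ^ 2 * en r := by
      calc en (F2ᵀ *ᵥ r) ≤ ‖F2ᵀ‖ * en r := en_mulVec_le _ _
        _ = ‖F2‖ * en r := by rw [Matrix.frobenius_norm_transpose]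
        _ ≤ KF * ‖t‖ ^ 2 * en r := mul_le_mul_of_nonneg_right hF2n hsr0
    have b2 : en (Emᵀ *ᵥ y) ≤ KE * ‖t‖ * en y := by
      calc en (Emᵀ *ᵥ y) ≤ ‖Emᵀ‖ * en y := en_mulVec_le _ _
        _ = ‖Em‖ * en y := by rw [Matrix.frobenius_norm_transpose]
        _ ≤ KE * ‖t‖ * en y := mul_le_mul_of_nonneg_right hEmn hsy0
    have e3 : |(Emᵀ *ᵥ r) ⬝ᵥ (Emᵀ *ᵥ y)| ≤ (KF * ‖t‖ ^ 2 * en r) * (KE * ‖t‖ * en y) := by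
      rw [z4]
      calc |(F2ᵀ *ᵥ r) ⬝ᵥ (Emᵀ *ᵥ y)| ≤ en (F2ᵀ *ᵥ r) * en (Emᵀ *ᵥ y) :=
            abs_dot_le_en _ _
        _ ≤ _ := mul_le_mul b1 b2 (en_nonneg _)
            (mul_nonneg (mul_nonneg hKF0 (sq_nonneg _)) hsr0)
    -- bound w ⬝ᵥ w from below
    obtain ⟨w0, hw0⟩ : ∃ x : Fin n → ℝ,
        x = X θ *ᵥ ((fderiv ℝ X θ t)ᵀ *ᵥ y) + fderiv ℝ X θ t *ᵥ v := ⟨_, rfl⟩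
    obtain ⟨w1, hw1⟩ : ∃ x : Fin n → ℝ,
        x = X θ *ᵥ (F2ᵀ *ᵥ y) + F2 *ᵥ v + Em *ᵥ (Emᵀ *ᵥ y) := ⟨_, rfl⟩
    have q1 : X θ *ᵥ (Emᵀ *ᵥ y) =
        X θ *ᵥ ((fderiv ℝ X θ t)ᵀ *ᵥ y) + X θ *ᵥ (F2ᵀ *ᵥ y) := by
      rw [hEmsplit, Matrix.transpose_add, Matrix.add_mulVec, Matrix.mulVec_add]
    have q2 : Em *ᵥ v = fderiv ℝ X θ t *ᵥ v + F2 *ᵥ v := by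
      rw [hEmsplit, Matrix.add_mulVec]
    have hw01 : w = w0 + w1 := by
      rw [hw, hw0, hw1, q1, q2]; abel
    have hcross0 : (X θ *ᵥ ((fderiv ℝ X θ t)ᵀ *ᵥ y)) ⬝ᵥ (fderiv ℝ X θ t *ᵥ v) = 0 := by
      rw [Matrix.dotProduct_mulVec, ← Matrix.mulVec_transpose,
        Matrix.mulVec_mulVec, hDX t, Matrix.zero_mulVec, zero_dotProduct]
    have hw0sq : w0 ⬝ᵥ w0 ≥ C ^ 2 * en v ^ 2 * ‖t‖ ^ 2 := by
      rw [hw0, dot_expand, hcross0]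
      have := hinj2 v t
      have := dot_self_nonneg (X θ *ᵥ ((fderiv ℝ X θ t)ᵀ *ᵥ y))
      linarith
    -- en w0, en w1 bounds
    have b3 : en (X θ *ᵥ ((fderiv ℝ X θ t)ᵀ *ᵥ y)) ≤
        ‖X θ‖ * ((fderiv ℝ X θ).opNorm * ‖t‖ * en y) := by
      calc en (X θ *ᵥ ((fderiv ℝ X θ t)ᵀ *ᵥ y)) ≤
          ‖X θ‖ * en ((fderiv ℝ X θ t)ᵀ *ᵥ y) := en_mulVec_le _ _
        _ ≤ ‖X θ‖ * (‖(fderiv ℝ X θ t)ᵀ‖ * en y) :=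
            mul_le_mul_of_nonneg_left (en_mulVec_le _ _) hnX0
        _ ≤ ‖X θ‖ * ((fderiv ℝ X θ).opNorm * ‖t‖ * en y) := by
            rw [Matrix.frobenius_norm_transpose]
            exact mul_le_mul_of_nonneg_left
              (mul_le_mul_of_nonneg_right hDmn hsy0) hnX0
    have b4 : en (fderiv ℝ X θ t *ᵥ v) ≤ (fderiv ℝ X θ).opNorm * ‖t‖ * en v := by
      calc en (fderiv ℝ X θ t *ᵥ v) ≤ ‖fderiv ℝ X θ t‖ * en v := en_mulVec_le _ _
        _ ≤ (fderiv ℝ X θ).opNorm * ‖t‖ * en v := mul_le_mul_of_nonneg_right hDmn hsv0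
    have hw0n : en w0 ≤ K0 * ‖t‖ := by
      rw [hw0]
      calc en (X θ *ᵥ ((fderiv ℝ X θ t)ᵀ *ᵥ y) + fderiv ℝ X θ t *ᵥ v) ≤
          en (X θ *ᵥ ((fderiv ℝ X θ t)ᵀ *ᵥ y)) + en (fderiv ℝ X θ t *ᵥ v) :=
            en_add_le _ _
        _ ≤ ‖X θ‖ * ((fderiv ℝ X θ).opNorm * ‖t‖ * en y) + (fderiv ℝ X θ).opNorm * ‖t‖ * en v := by
            linarith
        _ = K0 * ‖t‖ := by rw [hK0]; ring
    have b5 : en (X θ *ᵥ (F2ᵀ *ᵥ y)) ≤ ‖X θ‖ * (KF * ‖t‖ ^ 2 * en y) := by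
      calc en (X θ *ᵥ (F2ᵀ *ᵥ y)) ≤ ‖X θ‖ * en (F2ᵀ *ᵥ y) := en_mulVec_le _ _
        _ ≤ ‖X θ‖ * (‖F2ᵀ‖ * en y) :=
            mul_le_mul_of_nonneg_left (en_mulVec_le _ _) hnX0
        _ ≤ ‖X θ‖ * (KF * ‖t‖ ^ 2 * en y) := by
            rw [Matrix.frobenius_norm_transpose]
            exact mul_le_mul_of_nonneg_left
              (mul_le_mul_of_nonneg_right hF2n hsy0) hnX0
    have b6 : en (F2 *ᵥ v) ≤ KF * ‖t‖ ^ 2 * en v := by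
      calc en (F2 *ᵥ v) ≤ ‖F2‖ * en v := en_mulVec_le _ _
        _ ≤ KF * ‖t‖ ^ 2 * en v := mul_le_mul_of_nonneg_right hF2n hsv0
    have b7 : en (Em *ᵥ (Emᵀ *ᵥ y)) ≤ KE * ‖t‖ * (KE * ‖t‖ * en y) := by
      calc en (Em *ᵥ (Emᵀ *ᵥ y)) ≤ ‖Em‖ * en (Emᵀ *ᵥ y) := en_mulVec_le _ _
        _ ≤ (KE * ‖t‖) * (KE * ‖t‖ * en y) :=
            mul_le_mul hEmn b2 (en_nonneg _) (by positivity)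
    have hw1n : en w1 ≤ K1 * ‖t‖ ^ 2 := by
      rw [hw1]
      calc en (X θ *ᵥ (F2ᵀ *ᵥ y) + F2 *ᵥ v + Em *ᵥ (Emᵀ *ᵥ y)) ≤
          en (X θ *ᵥ (F2ᵀ *ᵥ y) + F2 *ᵥ v) + en (Em *ᵥ (Emᵀ *ᵥ y)) := en_add_le _ _
        _ ≤ en (X θ *ᵥ (F2ᵀ *ᵥ y)) + en (F2 *ᵥ v) + en (Em *ᵥ (Emᵀ *ᵥ y)) := by
            have := en_add_le (X θ *ᵥ (F2ᵀ *ᵥ y)) (F2 *ᵥ v)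
            linarith
        _ ≤ ‖X θ‖ * (KF * ‖t‖ ^ 2 * en y) + KF * ‖t‖ ^ 2 * en v +
            KE * ‖t‖ * (KE * ‖t‖ * en y) := by linarith
        _ = K1 * ‖t‖ ^ 2 := by rw [hK1]; ring
    have hcross : w0 ⬝ᵥ w1 ≥ -((K0 * ‖t‖) * (K1 * ‖t‖ ^ 2)) := by
      have habs : |w0 ⬝ᵥ w1| ≤ (K0 * ‖t‖) * (K1 * ‖t‖ ^ 2) := by
        calc |w0 ⬝ᵥ w1| ≤ en w0 * en w1 := abs_dot_le_en _ _
          _ ≤ (K0 * ‖t‖) * (K1 * ‖t‖ ^ 2) :=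
              mul_le_mul hw0n hw1n (en_nonneg _) (by positivity)
      have := abs_le.1 habs
      linarith [this.1]
    have e4 : w ⬝ᵥ w ≥ C ^ 2 * en v ^ 2 * ‖t‖ ^ 2 -
        2 * ((K0 * ‖t‖) * (K1 * ‖t‖ ^ 2)) := by
      rw [hw01, dot_expand]
      have := dot_self_nonneg w1
      linarith
    -- final assembly
    have f1 : en r * en v * ε₀ * ‖t‖ ^ 2 ≤ c / 8 * ‖t‖ ^ 2 :=
      mul_le_mul_of_nonneg_right hε₀le (sq_nonneg _)
    have f2 : Kc * ‖t‖ ≤ c / 8 := by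
      calc Kc * ‖t‖ ≤ Kc * δ₃ := mul_le_mul_of_nonneg_left ht3.le hKc0
        _ ≤ c / 8 := hδ₃
    have f2' : Kc * ‖t‖ * ‖t‖ ^ 2 ≤ c / 8 * ‖t‖ ^ 2 :=
      mul_le_mul_of_nonneg_right f2 (sq_nonneg _)
    have g3 : (KF * ‖t‖ ^ 2 * en r) * (KE * ‖t‖ * en y) + (K0 * ‖t‖) * (K1 * ‖t‖ ^ 2) =
        Kc * ‖t‖ * ‖t‖ ^ 2 := by rw [hKc]; ring
    have g4 : en r * (KF * ‖t‖ ^ 2 * en v) =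
        en r * en v * 2⁻¹ * ‖iteratedFDeriv ℝ 2 X θ‖ * ‖t‖ ^ 2 +
          en r * en v * ε₀ * ‖t‖ ^ 2 := by rw [hKF]; ring
    have g5 : (1/2) * (C ^ 2 * en v ^ 2 * ‖t‖ ^ 2) =
        (1/2) * c * ‖t‖ ^ 2 +
          en r * en v * 2⁻¹ * ‖iteratedFDeriv ℝ 2 X θ‖ * ‖t‖ ^ 2 := by
      rw [hcc]; ring
    have e2' := (abs_le.1 e2).2
    have e3' := (abs_le.1 e3).2
    have hfinal : G (θ + t) - G θ ≥ c / 4 * ‖t‖ ^ 2 := by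
      rw [hΔ, hrw, z3]
      linarith [e2', e3', e4, f1, f2', g3, g4, g5]
    have hc4 : 0 ≤ c / 4 * ‖t‖ ^ 2 := by positivity
    linarith
  unfold IsLocalMin IsMinFilter
  rw [← map_add_left_nhds_zero θ, eventually_map]
  exact hloc

set_option maxHeartbeats 2000000 in
/-- under-parametrized regime.  At a critical point `θ` of
`G(θ) = ½‖(I − X(θ)X(θ)ᵀ)y‖²` where the residual `r = (I − XXᵀ)y` is orthogonal to all
columns of all `dX(θ)[dθ]`, with horizontal derivatives and the injectivity bound
`‖dX(θ)[dθ]z‖ ≥ C‖z‖‖dθ‖`, the second-order quadratic form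
`Q(dθ) = ⟨dX[dθ], Hess F(X)[dX[dθ]]⟩ + ⟨grad F(X), d²X[dθ,dθ]⟩` satisfies
`Q(dθ) ≥ (C² − ‖r‖‖d²X‖/‖v‖)‖v‖²‖dθ‖²` with `v = Xᵀy`; in particular if
`‖r‖ < C²‖v‖/‖d²X‖` and `v ≠ 0` then `Q` is positive definite and `θ` is a local
minimum of `G`. -/
theorem stmt_3 {m n p : ℕ}
    (Θ : Set (EuclideanSpace ℝ (Fin m))) (hΘ : IsOpen Θ)
    (X : EuclideanSpace ℝ (Fin m) → Matrix (Fin n) (Fin p) ℝ)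
    (y : Fin n → ℝ) (θ : EuclideanSpace ℝ (Fin m)) (hθ : θ ∈ Θ)
    (hC2 : ContDiffAt ℝ 2 X θ)
    (hXst : ∀ θ' ∈ Θ, (X θ')ᵀ * X θ' = 1)
    (hcrit : fderiv ℝ
      (fun θ' => (1 / 2) * ∑ i, ((1 - X θ' * (X θ')ᵀ).mulVec y i) ^ 2) θ = 0)
    (hres : ∀ (dθ : EuclideanSpace ℝ (Fin m)) (j : Fin p),
      ∑ i, (1 - X θ * (X θ)ᵀ).mulVec y i * fderiv ℝ X θ dθ i j = 0)
    (hhoriz : ∀ dθ : EuclideanSpace ℝ (Fin m), (X θ)ᵀ * fderiv ℝ X θ dθ = 0)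
    (C : ℝ) (hC : 0 < C)
    (hinj : ∀ (z : Fin p → ℝ) (dθ : EuclideanSpace ℝ (Fin m)),
      Real.sqrt (∑ i, ((fderiv ℝ X θ dθ).mulVec z i) ^ 2) ≥
        C * Real.sqrt (∑ i, (z i) ^ 2) * ‖dθ‖) :
    let G : EuclideanSpace ℝ (Fin m) → ℝ :=
      fun θ' => (1 / 2) * ∑ i, ((1 - X θ' * (X θ')ᵀ).mulVec y i) ^ 2
    let M : Matrix (Fin n) (Fin n) ℝ := vecMulVec y y
    let r : Fin n → ℝ := (1 - X θ * (X θ)ᵀ).mulVec y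
    let v : Fin p → ℝ := (X θ)ᵀ.mulVec y
    let Q : EuclideanSpace ℝ (Fin m) → ℝ := fun dθ =>
      trace ((fderiv ℝ X θ dθ)ᵀ *
          (-((1 - X θ * (X θ)ᵀ) * M * fderiv ℝ X θ dθ) +
            fderiv ℝ X θ dθ * ((X θ)ᵀ * M * X θ))) +
        trace ((-((1 - X θ * (X θ)ᵀ) * M * X θ))ᵀ * iteratedFDeriv ℝ 2 X θ ![dθ, dθ])
    (∀ dθ : EuclideanSpace ℝ (Fin m),
      Q dθ ≥
        (C ^ 2 - Real.sqrt (∑ i, (r i) ^ 2) * ‖iteratedFDeriv ℝ 2 X θ‖ /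
            Real.sqrt (∑ i, (v i) ^ 2)) *
          Real.sqrt (∑ i, (v i) ^ 2) ^ 2 * ‖dθ‖ ^ 2) ∧
    ((Real.sqrt (∑ i, (r i) ^ 2) <
        C ^ 2 * Real.sqrt (∑ i, (v i) ^ 2) / ‖iteratedFDeriv ℝ 2 X θ‖ ∧ v ≠ 0) →
      (∀ dθ : EuclideanSpace ℝ (Fin m), dθ ≠ 0 → 0 < Q dθ) ∧ IsLocalMin G θ) := by
  intro G M r v Q
  -- basic vector facts
  have hrvm : ∀ dθ : EuclideanSpace ℝ (Fin m), r ᵥ* (fderiv ℝ X θ dθ) = 0 := by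
    intro dθ
    funext j
    exact hres dθ j
  have hQeq : ∀ dθ : EuclideanSpace ℝ (Fin m),
      Q dθ = ((fderiv ℝ X θ dθ).mulVec v) ⬝ᵥ ((fderiv ℝ X θ dθ).mulVec v) -
        r ⬝ᵥ ((iteratedFDeriv ℝ 2 X θ ![dθ, dθ]).mulVec v) := by
    intro dθ
    show trace ((fderiv ℝ X θ dθ)ᵀ *
          (-((1 - X θ * (X θ)ᵀ) * vecMulVec y y * fderiv ℝ X θ dθ) +
            fderiv ℝ X θ dθ * ((X θ)ᵀ * vecMulVec y y * X θ))) +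
        trace ((-((1 - X θ * (X θ)ᵀ) * vecMulVec y y * X θ))ᵀ *
          iteratedFDeriv ℝ 2 X θ ![dθ, dθ]) = _
    have e1 : (1 - X θ * (X θ)ᵀ) * vecMulVec y y = vecMulVec r y := _root_.mul_vecMulVec _ y y
    have e3 : (X θ)ᵀ * vecMulVec y y = vecMulVec v y := _root_.mul_vecMulVec _ y y
    have hv' : (X θ)ᵀ *ᵥ y = v := rfl
    rw [e1, e3, _root_.vecMulVec_mul, _root_.vecMulVec_mul, _root_.vecMulVec_mul, _root_.mul_vecMulVec]
    rw [Matrix.mul_add, Matrix.mul_neg, Matrix.trace_add, Matrix.trace_neg,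
      Matrix.transpose_neg, Matrix.neg_mul, Matrix.trace_neg,
      trace_transpose_mul_vecMulVec, trace_transpose_mul_vecMulVec,
      vecMulVec_transp, trace_vecMulVec_mul]
    have e0 : r ⬝ᵥ (fderiv ℝ X θ dθ).mulVec ((fderiv ℝ X θ dθ)ᵀ.mulVec y) = 0 := by
      rw [Matrix.dotProduct_mulVec, hrvm dθ, zero_dotProduct]
    rw [hv', e0]
    ring
  -- part 1
  have main : ∀ dθ : EuclideanSpace ℝ (Fin m),
      Q dθ ≥
        (C ^ 2 - Real.sqrt (∑ i, (r i) ^ 2) * ‖iteratedFDeriv ℝ 2 X θ‖ /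
            Real.sqrt (∑ i, (v i) ^ 2)) *
          Real.sqrt (∑ i, (v i) ^ 2) ^ 2 * ‖dθ‖ ^ 2 := by
    intro dθ
    show Q dθ ≥ (C ^ 2 - en r * ‖iteratedFDeriv ℝ 2 X θ‖ / en v) * en v ^ 2 * ‖dθ‖ ^ 2
    rcases eq_or_lt_of_le (en_nonneg v) with hv0 | hvpos
    · -- v = 0
      have hv : v = 0 := (en_eq_zero_iff v).1 hv0.symm
      rw [hQeq dθ, hv]
      simp [en]
    · have hB2 : ‖iteratedFDeriv ℝ 2 X θ ![dθ, dθ]‖ ≤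
          ‖iteratedFDeriv ℝ 2 X θ‖ * (‖dθ‖ * ‖dθ‖) := by
        have h := (iteratedFDeriv ℝ 2 X θ).le_opNorm ![dθ, dθ]
        simpa [Fin.prod_univ_two] using h
      have hT3 : r ⬝ᵥ ((iteratedFDeriv ℝ 2 X θ ![dθ, dθ]).mulVec v) ≤
          en r * (‖iteratedFDeriv ℝ 2 X θ‖ * (‖dθ‖ * ‖dθ‖) * en v) := by
        calc r ⬝ᵥ _ ≤ en r * en ((iteratedFDeriv ℝ 2 X θ ![dθ, dθ]).mulVec v) :=
              dot_le_en _ _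
          _ ≤ en r * (‖iteratedFDeriv ℝ 2 X θ ![dθ, dθ]‖ * en v) :=
              mul_le_mul_of_nonneg_left (en_mulVec_le _ _) (en_nonneg r)
          _ ≤ _ := mul_le_mul_of_nonneg_left
              (mul_le_mul_of_nonneg_right hB2 (en_nonneg v)) (en_nonneg r)
      have hT2 : C ^ 2 * (en v ^ 2) * ‖dθ‖ ^ 2 ≤
          ((fderiv ℝ X θ dθ).mulVec v) ⬝ᵥ ((fderiv ℝ X θ dθ).mulVec v) := by
        have hi := hinj v dθ
        have h1 : en ((fderiv ℝ X θ dθ).mulVec v) ≥ C * en v * ‖dθ‖ := hi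
        have h2 : ((fderiv ℝ X θ dθ).mulVec v) ⬝ᵥ ((fderiv ℝ X θ dθ).mulVec v) =
            en ((fderiv ℝ X θ dθ).mulVec v) ^ 2 := by
          rw [en_sq]
          simp [dotProduct, sq]
        rw [h2]
        have h0 : 0 ≤ C * en v * ‖dθ‖ :=
          mul_nonneg (mul_nonneg hC.le (en_nonneg v)) (norm_nonneg dθ)
        have h3 := mul_le_mul h1 h1 h0 (en_nonneg _)
        calc C ^ 2 * (en v ^ 2) * ‖dθ‖ ^ 2
            = (C * en v * ‖dθ‖) * (C * en v * ‖dθ‖) := by ring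
          _ ≤ _ * _ := h3
          _ = en ((fderiv ℝ X θ dθ).mulVec v) ^ 2 := by ring
      have hrhs : (C ^ 2 - en r * ‖iteratedFDeriv ℝ 2 X θ‖ / en v) * en v ^ 2 * ‖dθ‖ ^ 2 =
          C ^ 2 * (en v ^ 2) * ‖dθ‖ ^ 2 -
            en r * (‖iteratedFDeriv ℝ 2 X θ‖ * (‖dθ‖ * ‖dθ‖) * en v) := by
        field_simp
      rw [hQeq dθ, hrhs]
      linarith
  refine ⟨main, ?_⟩
  rintro ⟨h1, h2⟩
  have h1' : en r < C ^ 2 * en v / ‖iteratedFDeriv ℝ 2 X θ‖ := h1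
  have hsv : 0 < en v := by
    rcases eq_or_lt_of_le (en_nonneg v) with h | h
    · exact absurd ((en_eq_zero_iff v).1 h.symm) h2
    · exact h
  have hnB : 0 < ‖iteratedFDeriv ℝ 2 X θ‖ := by
    rcases eq_or_lt_of_le (norm_nonneg (iteratedFDeriv ℝ 2 X θ)) with h | h
    · rw [← h, div_zero] at h1'
      exact absurd h1' (not_lt.2 (en_nonneg r))
    · exact h
  have hcoef : en r * ‖iteratedFDeriv ℝ 2 X θ‖ < C ^ 2 * en v := (lt_div_iff₀ hnB).1 h1'
  constructor
  · intro dθ hdθ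
    have hq := main dθ
    have hpos : 0 < (C ^ 2 - Real.sqrt (∑ i, (r i) ^ 2) * ‖iteratedFDeriv ℝ 2 X θ‖ /
            Real.sqrt (∑ i, (v i) ^ 2)) *
          Real.sqrt (∑ i, (v i) ^ 2) ^ 2 * ‖dθ‖ ^ 2 := by
      show 0 < (C ^ 2 - en r * ‖iteratedFDeriv ℝ 2 X θ‖ / en v) * en v ^ 2 * ‖dθ‖ ^ 2
      have hd : 0 < ‖dθ‖ := norm_pos_iff.2 hdθ
      have hlt : en r * ‖iteratedFDeriv ℝ 2 X θ‖ / en v < C ^ 2 := by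
        rw [div_lt_iff₀ hsv]
        exact hcoef
      have h3 : 0 < C ^ 2 - en r * ‖iteratedFDeriv ℝ 2 X θ‖ / en v := by linarith
      exact mul_pos (mul_pos h3 (pow_pos hsv 2)) (pow_pos hd 2)
    exact lt_of_lt_of_le hpos hq
  · -- IsLocalMin
    exact aux_localmin X y θ hC2 (hXst θ hθ) C hC hinj r v rfl rfl hrvm hhoriz hsv hcoef
end

section
/- Let Ω ⊆ ℝ^d be a nonempty open connected set of finite positive Lebesgue measure, and let f₁, …, f_p : Ω → ℝ be real analytic functions that are linearly independent as elements of the vector space of real-valued functions on Ω. Let X₁, …, X_p be independent random variables, each distributed according to the normalized Lebesgue measure on Ω. Then the p×p random matrix M with entries M_{ij} = f_j(X_i) is invertible almost surely: ℙ(det M ≠ 0) = 1. -/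
open Matrix MeasureTheory ProbabilityTheory

section Aux


open MeasureTheory Set Filter Topology

/-- A set all of whose points are isolated in it is countable in a second countable space. -/
lemma countable_of_forall_isolated {α : Type*} [TopologicalSpace α]
    [SecondCountableTopology α] {Z : Set α}
    (h : ∀ z ∈ Z, ∃ U ∈ 𝓝 z, Z ∩ U ⊆ {z}) : Z.Countable := by
  have hb := TopologicalSpace.isBasis_countableBasis α
  choose U hU hZU using h
  have : ∀ z : Z, ∃ B ∈ TopologicalSpace.countableBasis α, (z : α) ∈ B ∧ B ⊆ U z z.2 := by
    intro z
    obtain ⟨B, hB, hzB, hBU⟩ := hb.mem_nhds_iff.1 (hU z z.2)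
    exact ⟨B, hB, hzB, hBU⟩
  choose B hBmem hzB hBU using this
  have hinj : Function.Injective B := by
    intro z w hzw
    have : (w : α) ∈ Z ∩ U z z.2 := ⟨w.2, hBU z (hzw ▸ hzB w)⟩
    exact Subtype.ext (hZU z z.2 this).symm
  have : Countable ↥(TopologicalSpace.countableBasis α) :=
    (TopologicalSpace.countable_countableBasis α).to_subtype
  rw [← Set.countable_coe_iff]
  exact Function.Injective.countable (f := fun z : Z =>
    (⟨B z, hBmem z⟩ : ↥(TopologicalSpace.countableBasis α))) fun a b hab =>
      hinj (by simpa using hab)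

/-- zero sets of not-identically-zero analytic functions are null. -/
def NullZeros (E : Type*) [NormedAddCommGroup E] [NormedSpace ℝ E] [MeasurableSpace E] (μ : Measure E) : Prop :=
  ∀ (U : Set E) (f : E → ℝ), IsOpen U → IsPreconnected U → AnalyticOnNhd ℝ f U →
    (∃ x ∈ U, f x ≠ 0) → μ {x ∈ U | f x = 0} = 0

lemma nullZeros_real : NullZeros ℝ volume := by
  intro U f hUo hUc hf ⟨x₀, hx₀, hfx₀⟩
  have hcount : {x ∈ U | f x = 0}.Countable := by
    apply countable_of_forall_isolated
    rintro z ⟨hzU, hz0⟩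
    have hz : AnalyticAt ℝ f z := hf z hzU
    rcases hz.eventually_eq_zero_or_eventually_ne_zero with h | h
    · exact absurd ((hf.eqOn_zero_of_preconnected_of_eventuallyEq_zero hUc hzU h) hx₀) hfx₀
    · rw [eventually_nhdsWithin_iff] at h
      obtain ⟨V, hV, hVsub⟩ := eventually_iff_exists_mem.1 h
      refine ⟨V, hV, ?_⟩
      rintro x ⟨⟨_, hx0⟩, hxV⟩
      by_contra hxz
      exact (hVsub x hxV (by simpa using hxz)) hx0
  exact hcount.measure_zero _

lemma nullZeros_pi_zero {E : Type*} [NormedAddCommGroup E] [NormedSpace ℝ E] [MeasurableSpace E]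
    (μ : Measure (Fin 0 → E)) : NullZeros (Fin 0 → E) μ := by
  intro U f hUo hUc hf ⟨x₀, hx₀, hfx₀⟩
  have : {x ∈ U | f x = 0} = ∅ := by
    ext x
    simp only [Set.mem_setOf_eq, Set.mem_empty_iff_false, iff_false, not_and]
    intro hxU
    have : x = x₀ := Subsingleton.elim x x₀
    rw [this]; exact hfx₀
  rw [this, measure_empty]

lemma nullZeros_pi_succ {E : Type*} [NormedAddCommGroup E] [NormedSpace ℝ E] [MeasurableSpace E]
    [BorelSpace E] [SecondCountableTopology E] (μ : Measure E) [SigmaFinite μ] {m : ℕ}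
    (hE : NullZeros E μ) (hm : NullZeros (Fin m → E) (Measure.pi fun _ => μ)) :
    NullZeros (Fin (m + 1) → E) (Measure.pi fun _ => μ) := by
  classical
  intro U f hUo hUc hf hx
  obtain ⟨x₀, hx₀U, hfx₀⟩ := hx
  set ν : Measure (Fin m → E) := Measure.pi fun _ => μ with hν
  -- the transformation
  set T : E × (Fin m → E) → (Fin (m + 1) → E) := fun q => Fin.cons q.1 q.2 with hT
  set L : E × (Fin m → E) →L[ℝ] (Fin (m + 1) → E) :=
    ContinuousLinearMap.pi (fun i => Fin.cases (ContinuousLinearMap.fst ℝ E (Fin m → E))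
      (fun j => (ContinuousLinearMap.proj j).comp (ContinuousLinearMap.snd ℝ E (Fin m → E))) i)
    with hLdef
  have hL : ∀ q, L q = T q := by
    intro q
    funext i
    induction i using Fin.cases with
    | zero => simp [hLdef, hT]
    | succ j => simp [hLdef, hT]
  apply measure_null_of_locally_null
  intro z hz
  have hzU : z ∈ U := hz.1
  -- f is not eventually zero at z
  have hnev : ¬ (f =ᶠ[nhds z] 0) := by
    intro h
    exact hfx₀ (hf.eqOn_zero_of_preconnected_of_eventuallyEq_zero hUc hzU h hx₀U)
  obtain ⟨δ, hδ, hball⟩ := Metric.isOpen_iff.1 hUo z hzU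
  -- a point in the ball where f is nonzero
  have hfreq : ∃ᶠ x in nhds z, f x ≠ 0 := Filter.not_eventually.1 hnev
  obtain ⟨x₁, hx₁ball, hfx₁⟩ := Filter.frequently_iff.1 hfreq (Metric.ball_mem_nhds z hδ)
  set y₁ : E := x₁ 0 with hy₁
  set w₁ : Fin m → E := fun j => x₁ j.succ with hw₁
  have hTx₁ : T (y₁, w₁) = x₁ := by
    funext i
    induction i using Fin.cases with
    | zero => simp [hT, hy₁]
    | succ j => simp [hT, hw₁]
  set BE : Set E := Metric.ball (z 0) δ with hBE
  set BV : Set (Fin m → E) := Metric.ball (fun j => z j.succ) δ with hBV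
  set W : Set (E × (Fin m → E)) := BE ×ˢ BV with hW
  have hWopen : IsOpen W := (Metric.isOpen_ball).prod Metric.isOpen_ball
  -- mapping of W into ball z δ
  have hmaps : ∀ q ∈ W, T q ∈ Metric.ball z δ := by
    rintro ⟨y, w⟩ ⟨hy, hw⟩
    rw [Metric.mem_ball, dist_pi_lt_iff hδ]
    intro i
    induction i using Fin.cases with
    | zero => simpa [hT, hBE] using hy
    | succ j =>
      calc dist (T (y, w) j.succ) (z j.succ) = dist (w j) (z j.succ) := by simp [hT]
        _ ≤ dist w (fun j => z j.succ) := by simpa using dist_le_pi_dist w (fun j => z j.succ) j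
        _ < δ := hw
  set F : E × (Fin m → E) → ℝ := fun q => f (L q) with hF
  have hFT : ∀ q, F q = f (T q) := fun q => congrArg f (hL q)
  have hFan : AnalyticOnNhd ℝ F W := by
    intro q hq
    exact (hf (L q) (by rw [hL]; exact hball (hmaps q hq))).comp (L.analyticAt q)
  -- membership facts for x in ball z δ
  have hx_mem : ∀ x ∈ Metric.ball z δ, (x 0 ∈ BE ∧ (fun j => x j.succ) ∈ BV) := by
    intro x hx
    constructor
    · exact Metric.mem_ball.2 (lt_of_le_of_lt (dist_le_pi_dist x z 0) hx)
    · rw [hBV, Metric.mem_ball, dist_pi_lt_iff hδ]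
      intro j
      exact lt_of_le_of_lt (dist_le_pi_dist x z j.succ) hx
  have hy₁BE : y₁ ∈ BE := (hx_mem x₁ hx₁ball).1
  have hw₁BV : w₁ ∈ BV := (hx_mem x₁ hx₁ball).2
  -- Zloc and its measurability
  set Zloc : Set (E × (Fin m → E)) := {q ∈ W | F q = 0} with hZloc
  have hFcont : ContinuousOn F W := hFan.continuousOn
  have hZlocMeas : MeasurableSet Zloc := by
    obtain ⟨u, hu, huW⟩ := (continuousOn_iff_isClosed.1 hFcont) {0} isClosed_singleton
    have : Zloc = u ∩ W := by
      rw [← huW]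
      ext q
      simp [hZloc, Set.mem_setOf_eq, and_comm]
    rw [this]
    exact hu.measurableSet.inter hWopen.measurableSet
  -- product measure of Zloc is zero via Fubini
  have hprod : (μ.prod ν) Zloc = 0 := by
    rw [Measure.measure_prod_null hZlocMeas]
    set h : E → ℝ := fun y => F (y, w₁) with hh
    have hhan : AnalyticOnNhd ℝ h BE := by
      intro y hy
      exact AnalyticAt.comp (f := fun y' : E => (y', w₁))
        (hFan (y, w₁) ⟨hy, hw₁BV⟩) ((analyticAt_id).prod analyticAt_const)
    have hhy₁ : h y₁ ≠ 0 := by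
      rw [hh]
      simp only [hFT, hTx₁]
      exact hfx₁
    have hN : μ {y ∈ BE | h y = 0} = 0 :=
      hE BE h Metric.isOpen_ball (convex_ball _ _).isPreconnected hhan ⟨y₁, hy₁BE, hhy₁⟩
    have hae : ∀ᵐ y ∂μ, y ∉ {y | y ∈ BE ∧ h y = 0} := measure_eq_zero_iff_ae_notMem.mp hN
    filter_upwards [hae] with y hy
    simp only [Pi.zero_apply]
    by_cases hyBE : y ∈ BE
    · have hhy : h y ≠ 0 := fun h0 => hy ⟨hyBE, h0⟩
      set g : (Fin m → E) → ℝ := fun w => F (y, w) with hg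
      have hgan : AnalyticOnNhd ℝ g BV := by
        intro w hw
        exact AnalyticAt.comp (f := fun w' : Fin m → E => (y, w'))
          (hFan (y, w) ⟨hyBE, hw⟩) (analyticAt_const.prod (analyticAt_id))
      have hgnull : ν {w ∈ BV | g w = 0} = 0 :=
        hm BV g Metric.isOpen_ball (convex_ball _ _).isPreconnected hgan ⟨w₁, hw₁BV, hhy⟩
      refine measure_mono_null ?_ hgnull
      rintro w ⟨⟨_, hwBV⟩, hFw⟩
      exact ⟨hwBV, hFw⟩
    · have : Prod.mk y ⁻¹' Zloc = ∅ := by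
        ext w
        simp only [Set.mem_preimage, Set.mem_empty_iff_false, iff_false]
        rintro ⟨⟨hyBE', _⟩, _⟩
        exact hyBE hyBE'
      rw [this, measure_empty]
  -- transfer back to the pi space
  have hmp := measurePreserving_piFinSuccAbove (fun _ : Fin (m + 1) => μ) 0
  set e := MeasurableEquiv.piFinSuccAbove (fun _ : Fin (m + 1) => E) 0 with he
  have hsub : {x ∈ U | f x = 0} ∩ Metric.ball z δ ⊆ e ⁻¹' Zloc := by
    rintro x ⟨⟨hxU, hfx⟩, hxball⟩
    have h1 : (e x).1 = x 0 := rfl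
    have hTe : T (e x) = x := by
      funext i
      induction i using Fin.cases with
      | zero => simp [hT, e]
      | succ j => simp [hT, e, Fin.succAbove, Fin.tail]
    constructor
    · -- e x ∈ W
      have := hx_mem x hxball
      refine ⟨this.1, ?_⟩
      have : (e x).2 = fun j => x j.succ := by
        funext j
        simp [e, Fin.succAbove, Fin.tail]
      rw [this]
      exact (hx_mem x hxball).2
    · rw [hFT, hTe]; exact hfx
  have hpre : (Measure.pi fun _ : Fin (m + 1) => μ) (e ⁻¹' Zloc) = 0 := by
    rw [hmp.measure_preimage hZlocMeas.nullMeasurableSet]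
    exact hprod
  refine ⟨{x ∈ U | f x = 0} ∩ Metric.ball z δ,
    inter_mem_nhdsWithin _ (Metric.ball_mem_nhds z hδ), ?_⟩
  exact measure_mono_null hsub hpre

lemma nullZeros_pi {E : Type*} [NormedAddCommGroup E] [NormedSpace ℝ E] [MeasurableSpace E]
    [BorelSpace E] [SecondCountableTopology E] (μ : Measure E) [SigmaFinite μ]
    (hE : NullZeros E μ) : ∀ m : ℕ, NullZeros (Fin m → E) (Measure.pi fun _ => μ)
  | 0 => nullZeros_pi_zero _
  | (m + 1) => nullZeros_pi_succ μ hE (nullZeros_pi μ hE m)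

lemma pi_absolutelyContinuous {E : Type*} [MeasurableSpace E]
    (μ ν : Measure E) [SigmaFinite μ] [SigmaFinite ν] (h : μ ≪ ν) (m : ℕ) :
    (Measure.pi fun _ : Fin m => μ) ≪ (Measure.pi fun _ : Fin m => ν) := by
  induction m with
  | zero =>
      rw [Measure.pi_of_empty, Measure.pi_of_empty]
  | succ m ih =>
      have h1 := measurePreserving_piFinSuccAbove (fun _ : Fin (m + 1) => μ) 0
      have h2 := measurePreserving_piFinSuccAbove (fun _ : Fin (m + 1) => ν) 0
      set e := MeasurableEquiv.piFinSuccAbove (fun _ : Fin (m + 1) => E) 0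
      have e1 : (Measure.pi fun _ : Fin (m + 1) => μ) =
          (μ.prod (Measure.pi fun _ : Fin m => μ)).map e.symm := by
        rw [← h1.map_eq, MeasurableEquiv.map_symm_map]
      have e2 : (Measure.pi fun _ : Fin (m + 1) => ν) =
          (ν.prod (Measure.pi fun _ : Fin m => ν)).map e.symm := by
        rw [← h2.map_eq, MeasurableEquiv.map_symm_map]
      rw [e1, e2]
      exact (h.prod ih).map e.symm.measurable

open Matrix in
lemma det_analyticOnNhd {d p : ℕ} (Ω : Set (Fin d → ℝ)) (f : Fin p → (Fin d → ℝ) → ℝ)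
    (hana : ∀ j, AnalyticOnNhd ℝ (f j) Ω) :
    AnalyticOnNhd ℝ (fun x : Fin p → (Fin d → ℝ) => (Matrix.of fun i j => f j (x i)).det)
      (Set.pi Set.univ fun _ => Ω) := by
  have : (fun x : Fin p → (Fin d → ℝ) => (Matrix.of fun i j => f j (x i)).det) =
      fun x => ∑ σ : Equiv.Perm (Fin p), (Equiv.Perm.sign σ : ℤ) *
        ∏ i, f i (x (σ i)) := by
    funext x
    rw [Matrix.det_apply']
    rfl
  rw [this]
  apply Finset.analyticOnNhd_fun_sum
  intro σ _
  apply AnalyticOnNhd.mul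
  · exact analyticOnNhd_const
  · apply Finset.analyticOnNhd_fun_prod
    intro i _
    intro x hx
    exact AnalyticAt.comp (f := fun x : Fin p → (Fin d → ℝ) => x (σ i))
      (hana i (x (σ i)) (hx (σ i) trivial))
      ((ContinuousLinearMap.proj (σ i) : ((Fin p → (Fin d → ℝ)) →L[ℝ] (Fin d → ℝ))).analyticAt x)

open Matrix in
lemma exists_det_ne_zero {α : Type*} (s : Set α) :
    ∀ (p : ℕ) (f : Fin p → α → ℝ),
    LinearIndependent ℝ (fun j => s.restrict (f j)) →
    ∃ x : Fin p → α, (∀ i, x i ∈ s) ∧ (Matrix.of fun i j => f j (x i)).det ≠ 0 := by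
  intro p
  induction p with
  | zero =>
      intro f _
      exact ⟨fun i => i.elim0, fun i => i.elim0, by simp [Matrix.det_isEmpty]⟩
  | succ p ih =>
      intro f hind
      have hind' : LinearIndependent ℝ (fun j : Fin p => s.restrict (f j.succ)) :=
        hind.comp Fin.succ (Fin.succ_injective p)
      obtain ⟨x, hxmem, hdet⟩ := ih (fun j => f j.succ) hind'
      set c : Fin (p + 1) → ℝ :=
        fun j => (-1 : ℝ) ^ (j : ℕ) * (Matrix.of fun i k => f (j.succAbove k) (x i)).det with hc
      have hc0 : c 0 ≠ 0 := by
        have : (Matrix.of fun i k => f ((0 : Fin (p+1)).succAbove k) (x i)) =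
            (Matrix.of fun i k => f k.succ (x i)) := by
          ext i k
          simp [Fin.succAbove_zero]
        simp only [hc, this, Fin.val_zero, pow_zero, one_mul]
        exact hdet
      have hy : ∃ y ∈ s, ∑ j, c j * f j y ≠ 0 := by
        by_contra hcon
        push_neg at hcon
        have hzero : ∑ j, c j • s.restrict (f j) = 0 := by
          funext y
          simpa [Set.restrict] using hcon y y.2
        have := Fintype.linearIndependent_iff.1 hind c (by simpa using hzero)
        exact hc0 (this 0)
      obtain ⟨y, hys, hysum⟩ := hy
      refine ⟨Fin.cons y x, fun i => ?_, ?_⟩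
      · induction i using Fin.cases with
        | zero => simpa using hys
        | succ j => simpa using hxmem j
      · rw [Matrix.det_succ_row_zero]
        have : ∀ j : Fin (p + 1),
            (-1 : ℝ) ^ (j : ℕ) * (Matrix.of fun i k => f k ((Fin.cons y x : Fin (p+1) → α) i)) 0 j *
              ((Matrix.of fun i k => f k ((Fin.cons y x : Fin (p+1) → α) i)).submatrix Fin.succ j.succAbove).det
            = c j * f j y := by
          intro j
          have hsub : ((Matrix.of fun i k => f k ((Fin.cons y x : Fin (p+1) → α) i)).submatrix Fin.succ
              j.succAbove) = (Matrix.of fun i k => f (j.succAbove k) (x i)) := by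
            ext i k
            simp [Matrix.submatrix_apply]
          rw [hsub]
          simp only [Matrix.of_apply, Fin.cons_zero, hc]
          ring
        rw [Finset.sum_congr rfl fun j _ => this j]
        exact hysum

open ProbabilityTheory in
lemma map_tuple_eq_pi {Ω' : Type*} [MeasurableSpace Ω'] (P : Measure Ω') [IsProbabilityMeasure P]
    {p : ℕ} {β : Type*} [MeasurableSpace β] (Xs : Fin p → Ω' → β)
    (hmeas : ∀ i, Measurable (Xs i))
    (hindep : iIndepFun Xs P) :
    P.map (fun ω i => Xs i ω) = Measure.pi (fun i => P.map (Xs i)) := by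
  haveI : ∀ i, IsProbabilityMeasure (P.map (Xs i)) :=
    fun i => Measure.isProbabilityMeasure_map (hmeas i).aemeasurable
  refine (Measure.pi_eq fun s hs => ?_).symm
  rw [Measure.map_apply (measurable_pi_lambda _ fun i => hmeas i)
    (MeasurableSet.univ_pi fun i => hs i)]
  have hpre : (fun ω i => Xs i ω) ⁻¹' (Set.pi Set.univ s) = ⋂ i, Xs i ⁻¹' s i := by
    ext ω; simp [Set.mem_pi]
  rw [hpre, hindep.meas_iInter (fun i => ⟨s i, hs i, rfl⟩)]
  exact Finset.prod_congr rfl fun i _ =>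
    (Measure.map_apply (hmeas i) (hs i)).symm


end Aux

/-- if `f₁, …, f_p` are real analytic on a nonempty open connected set
`Ω ⊆ ℝ^d` of finite positive Lebesgue measure and linearly independent as functions on
`Ω`, and `X₁, …, X_p` are i.i.d. with the normalized Lebesgue distribution on `Ω`, then
the sampling matrix `M_{ij} = f_j(X_i)` is almost surely invertible. -/
theorem stmt_4 {d p : ℕ} (Ω : Set (Fin d → ℝ)) (hne : Ω.Nonempty) (hop : IsOpen Ω)
    (hconn : IsConnected Ω) (hpos : 0 < volume Ω) (hfin : volume Ω < ⊤)
    (f : Fin p → (Fin d → ℝ) → ℝ)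
    (hana : ∀ j, AnalyticOnNhd ℝ (f j) Ω)
    (hind : LinearIndependent ℝ fun j => Ω.restrict (f j))
    {Ω' : Type*} [MeasurableSpace Ω'] (P : Measure Ω') [IsProbabilityMeasure P]
    (Xs : Fin p → Ω' → (Fin d → ℝ)) (hmeas : ∀ i, Measurable (Xs i))
    (hindep : iIndepFun Xs P)
    (hlaw : ∀ i, P.map (Xs i) = (volume Ω)⁻¹ • volume.restrict Ω) :
    P {ω | (Matrix.of fun i j => f j (Xs i ω)).det ≠ 0} = 1 := by
  classical
  set μ₀ : Measure (Fin d → ℝ) := (volume Ω)⁻¹ • volume.restrict Ω with hμ₀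
  have hμ₀Ω : μ₀ Ω = 1 := by
    rw [hμ₀, Measure.smul_apply, Measure.restrict_apply hop.measurableSet, Set.inter_self,
      smul_eq_mul, ENNReal.inv_mul_cancel hpos.ne' hfin.ne]
  haveI : IsProbabilityMeasure μ₀ := by
    constructor
    rw [hμ₀, Measure.smul_apply, Measure.restrict_apply MeasurableSet.univ, Set.univ_inter,
      smul_eq_mul, ENNReal.inv_mul_cancel hpos.ne' hfin.ne]
  -- joint distribution
  set T : Ω' → (Fin p → (Fin d → ℝ)) := fun ω i => Xs i ω with hT
  have hTmeas : Measurable T := measurable_pi_lambda _ fun i => hmeas i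
  have hmap : P.map T = Measure.pi (fun _ : Fin p => μ₀) := by
    rw [hT, map_tuple_eq_pi P Xs hmeas hindep]
    exact congrArg Measure.pi (funext fun i => hlaw i)
  -- the zero set of the determinant function on Ω^p
  set Ωp : Set (Fin p → (Fin d → ℝ)) := Set.pi Set.univ (fun _ => Ω) with hΩp
  have hΩpo : IsOpen Ωp := isOpen_set_pi Set.finite_univ (fun i _ => hop)
  have hΩpc : IsPreconnected Ωp := isPreconnected_univ_pi (fun i => hconn.isPreconnected)
  set g : (Fin p → (Fin d → ℝ)) → ℝ := fun x => (Matrix.of fun i j => f j (x i)).det with hg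
  have hgan : AnalyticOnNhd ℝ g Ωp := det_analyticOnNhd Ω f hana
  obtain ⟨xs, hxsmem, hxsdet⟩ := exists_det_ne_zero Ω p f hind
  have hxsΩp : xs ∈ Ωp := by
    rw [hΩp, Set.mem_pi]; exact fun i _ => hxsmem i
  set Zin : Set (Fin p → (Fin d → ℝ)) := {x ∈ Ωp | g x = 0} with hZin
  -- measure zero of Zin
  have n1 : NullZeros ℝ volume := nullZeros_real
  have n2 : NullZeros (Fin d → ℝ) volume := by
    rw [volume_pi]; exact nullZeros_pi volume n1 d
  have n3 : NullZeros (Fin p → (Fin d → ℝ)) (Measure.pi fun _ => volume) :=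
    nullZeros_pi volume n2 p
  have hZvol : (Measure.pi fun _ : Fin p => volume) Zin = 0 :=
    n3 Ωp g hΩpo hΩpc hgan ⟨xs, hxsΩp, hxsdet⟩
  have hAC : μ₀ ≪ (volume : Measure (Fin d → ℝ)) := by
    refine Measure.AbsolutelyContinuous.mk fun s hs h0 => ?_
    rw [hμ₀, Measure.smul_apply, Measure.restrict_apply hs, smul_eq_mul]
    rw [measure_mono_null Set.inter_subset_left h0, mul_zero]
  have hZμ : (Measure.pi fun _ : Fin p => μ₀) Zin = 0 :=
    pi_absolutelyContinuous μ₀ volume hAC p hZvol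
  -- measurability of Zin
  have hZinMeas : MeasurableSet Zin := by
    obtain ⟨u, hu, huW⟩ := (continuousOn_iff_isClosed.1 hgan.continuousOn) {0} isClosed_singleton
    have : Zin = u ∩ Ωp := by
      rw [← huW]; ext q; simp [hZin, Set.mem_setOf_eq, and_comm]
    rw [this]
    exact hu.measurableSet.inter hΩpo.measurableSet
  -- complement of Ω^p is null for the product law
  haveI : IsProbabilityMeasure (Measure.pi fun _ : Fin p => μ₀) := by infer_instance
  have hΩpc0 : (Measure.pi fun _ : Fin p => μ₀) Ωpᶜ = 0 := by
    rw [measure_compl hΩpo.measurableSet (measure_ne_top _ _), hΩp, Measure.pi_pi]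
    simp [hμ₀Ω]
  -- the bad event
  set S₀ : Set Ω' := T ⁻¹' (Zin ∪ Ωpᶜ) with hS₀
  have hS₀meas : MeasurableSet S₀ :=
    hTmeas (hZinMeas.union hΩpo.measurableSet.compl)
  have hS₀0 : P S₀ = 0 := by
    rw [hS₀, ← Measure.map_apply hTmeas (hZinMeas.union hΩpo.measurableSet.compl), hmap]
    exact measure_union_null hZμ hΩpc0
  have hsub : S₀ᶜ ⊆ {ω | (Matrix.of fun i j => f j (Xs i ω)).det ≠ 0} := by
    intro ω hω
    simp only [hS₀, Set.mem_compl_iff, Set.mem_preimage, Set.mem_union, not_or,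
      Set.mem_compl_iff, not_not] at hω
    intro h0
    exact hω.1 ⟨hω.2, h0⟩
  have h1 : P S₀ᶜ = 1 := by
    rw [measure_compl hS₀meas (measure_ne_top _ _), hS₀0, measure_univ, tsub_zero]
  refine le_antisymm prob_le_one ?_
  calc (1 : ENNReal) = P S₀ᶜ := h1.symm
    _ ≤ P {ω | (Matrix.of fun i j => f j (Xs i ω)).det ≠ 0} := measure_mono hsub
end

section
/- Fix ε > 0 and define π_ε : ℝ^{n×p} → Sym(n) by π_ε(X) = X (XᵀX + ε I_p)⁻¹ Xᵀ. Then π_ε is Fréchet differentiable at every X ∈ ℝ^{n×p}, and its derivative in the direction Δ ∈ ℝ^{n×p} is Dπ_ε(X)[Δ] = (I_n − P) Δ K Xᵀ + ((I_n − P) Δ K Xᵀ)ᵀ, where K = (XᵀX + ε I_p)⁻¹ and P = π_ε(X). -/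
open Matrix

attribute [local instance] Matrix.frobeniusNormedAddCommGroup Matrix.frobeniusNormedSpace

/-- The regularized projection map `π_ε(X) = X (XᵀX + ε I)⁻¹ Xᵀ`. -/
noncomputable def piEps {n p : ℕ} (ε : ℝ) (X : Matrix (Fin n) (Fin p) ℝ) :
    Matrix (Fin n) (Fin n) ℝ :=
  X * (Xᵀ * X + ε • (1 : Matrix (Fin p) (Fin p) ℝ))⁻¹ * Xᵀ

/-- Matrix multiplication as a continuous bilinear map (Frobenius norms). -/
noncomputable def mulCLM (a b c : ℕ) :
    Matrix (Fin a) (Fin b) ℝ →L[ℝ] Matrix (Fin b) (Fin c) ℝ →L[ℝ] Matrix (Fin a) (Fin c) ℝ :=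
  LinearMap.toContinuousLinearMap
    { toFun := fun A => LinearMap.toContinuousLinearMap
        { toFun := fun B => A * B
          map_add' := fun B C => Matrix.mul_add A B C
          map_smul' := fun r B => Matrix.mul_smul A r B }
      map_add' := by
        intro A A'
        ext B
        simp [Matrix.add_mul]
      map_smul' := by
        intro r A
        ext B
        simp [Matrix.smul_mul] }

@[simp] lemma mulCLM_apply {a b c : ℕ} (A : Matrix (Fin a) (Fin b) ℝ)
    (B : Matrix (Fin b) (Fin c) ℝ) : mulCLM a b c A B = A * B := rfl

/-- Transpose as a continuous linear map. -/
noncomputable def tCLM (a b : ℕ) :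
    Matrix (Fin a) (Fin b) ℝ →L[ℝ] Matrix (Fin b) (Fin a) ℝ :=
  LinearMap.toContinuousLinearMap
    { toFun := Matrix.transpose
      map_add' := Matrix.transpose_add
      map_smul' := fun r A => Matrix.transpose_smul r A }

@[simp] lemma tCLM_apply {a b : ℕ} (A : Matrix (Fin a) (Fin b) ℝ) : tCLM a b A = Aᵀ := rfl

/-- Product rule for matrix-valued maps. -/
lemma HasFDerivAt.matmul {E : Type*} [NormedAddCommGroup E] [NormedSpace ℝ E]
    {a b c : ℕ} {f : E → Matrix (Fin a) (Fin b) ℝ} {g : E → Matrix (Fin b) (Fin c) ℝ}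
    {f' : E →L[ℝ] Matrix (Fin a) (Fin b) ℝ} {g' : E →L[ℝ] Matrix (Fin b) (Fin c) ℝ}
    {x : E} (hf : HasFDerivAt f f' x) (hg : HasFDerivAt g g' x) :
    HasFDerivAt (fun y => f y * g y)
      (HAdd.hAdd (α := E →L[ℝ] Matrix (Fin a) (Fin c) ℝ)
        (β := E →L[ℝ] Matrix (Fin a) (Fin c) ℝ) ((mulCLM a b c (f x)).comp g')
        (((mulCLM a b c).flip (g x)).comp f')) x := by
  have h := ((mulCLM a b c).isBoundedBilinearMap.hasFDerivAt (f x, g x)).comp x (hf.prodMk hg)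
  have hfun : (fun y => f y * g y) =
      (fun q : Matrix (Fin a) (Fin b) ℝ × Matrix (Fin b) (Fin c) ℝ => mulCLM a b c q.1 q.2) ∘
        (fun y => (f y, g y)) := rfl
  rw [hfun]
  refine h.congr_fderiv ?_
  ext Δ : 1
  simp [IsBoundedBilinearMap.deriv_apply]
  rfl

lemma posDef_aux {n p : ℕ} (ε : ℝ) (hε : 0 < ε) (X : Matrix (Fin n) (Fin p) ℝ) :
    (Xᵀ * X + ε • (1 : Matrix (Fin p) (Fin p) ℝ)).PosDef := by
  have h1 : (Xᵀ * X).PosSemidef := by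
    have := Matrix.posSemidef_conjTranspose_mul_self X
    simpa using this
  have h2 : (ε • (1 : Matrix (Fin p) (Fin p) ℝ)).PosDef := by
    rw [Matrix.smul_one_eq_diagonal]
    exact Matrix.PosDef.diagonal fun _ => hε
  exact Matrix.PosDef.posSemidef_add h1 h2

/-- Key lemma: `piEps` has a derivative at `X` with an explicit formula. -/
lemma piEps_hasFDerivAt {n p : ℕ} (ε : ℝ) (hε : 0 < ε) (X : Matrix (Fin n) (Fin p) ℝ) :
    ∃ D : Matrix (Fin n) (Fin p) ℝ →L[ℝ] Matrix (Fin n) (Fin n) ℝ,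
      HasFDerivAt (piEps ε) D X ∧
      ∀ Δ : Matrix (Fin n) (Fin p) ℝ,
        D Δ = X * (Xᵀ * X + ε • (1 : Matrix (Fin p) (Fin p) ℝ))⁻¹ * Δᵀ +
          (-(X * ((Xᵀ * X + ε • (1 : Matrix (Fin p) (Fin p) ℝ))⁻¹ * (Xᵀ * Δ + Δᵀ * X) *
              (Xᵀ * X + ε • (1 : Matrix (Fin p) (Fin p) ℝ))⁻¹)) +
            Δ * (Xᵀ * X + ε • (1 : Matrix (Fin p) (Fin p) ℝ))⁻¹) * Xᵀ := by
  letI : NormedRing (Matrix (Fin p) (Fin p) ℝ) := Matrix.frobeniusNormedRing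
  letI : NormedAlgebra ℝ (Matrix (Fin p) (Fin p) ℝ) := Matrix.frobeniusNormedAlgebra
  set M : Matrix (Fin p) (Fin p) ℝ := Xᵀ * X + ε • 1 with hM
  have hU : IsUnit M := (posDef_aux ε hε X).isUnit
  have hT : HasFDerivAt (fun Y : Matrix (Fin n) (Fin p) ℝ => Yᵀ) (tCLM n p) X :=
    (tCLM n p).hasFDerivAt
  have hId : HasFDerivAt (fun Y : Matrix (Fin n) (Fin p) ℝ => Y)
      (ContinuousLinearMap.id ℝ _) X := hasFDerivAt_id X
  have hMder : HasFDerivAt (fun Y : Matrix (Fin n) (Fin p) ℝ => Yᵀ * Y + ε • 1)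
      (HAdd.hAdd (α := Matrix (Fin n) (Fin p) ℝ →L[ℝ] Matrix (Fin p) (Fin p) ℝ)
        (β := Matrix (Fin n) (Fin p) ℝ →L[ℝ] Matrix (Fin p) (Fin p) ℝ) (mulCLM p n p Xᵀ)
        (((mulCLM p n p).flip X).comp (tCLM n p))) X := by
    have h := (hT.matmul hId).add_const (ε • (1 : Matrix (Fin p) (Fin p) ℝ))
    refine h.congr_fderiv ?_
    ext Δ : 1
    rfl
  have hinv : HasFDerivAt Ring.inverse
      (-(ContinuousLinearMap.mulLeftRight ℝ (Matrix (Fin p) (Fin p) ℝ) M⁻¹ M⁻¹)) M := by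
    have h := hasFDerivAt_ringInverse (𝕜 := ℝ) hU.unit
    have h1 : ((hU.unit⁻¹ : (Matrix (Fin p) (Fin p) ℝ)ˣ) : Matrix (Fin p) (Fin p) ℝ) = M⁻¹ := by
      rw [Matrix.nonsing_inv_eq_ringInverse, ← Ring.inverse_unit hU.unit, hU.unit_spec]
    rw [h1, hU.unit_spec] at h
    exact h
  have hK : HasFDerivAt (fun Y : Matrix (Fin n) (Fin p) ℝ => (Yᵀ * Y + ε • 1)⁻¹)
      ((-(ContinuousLinearMap.mulLeftRight ℝ (Matrix (Fin p) (Fin p) ℝ) M⁻¹ M⁻¹)).comp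
        (HAdd.hAdd (α := Matrix (Fin n) (Fin p) ℝ →L[ℝ] Matrix (Fin p) (Fin p) ℝ)
          (β := Matrix (Fin n) (Fin p) ℝ →L[ℝ] Matrix (Fin p) (Fin p) ℝ) (mulCLM p n p Xᵀ)
          (((mulCLM p n p).flip X).comp (tCLM n p)))) X := by
    have h := hinv.comp X hMder
    have hfun : (fun Y : Matrix (Fin n) (Fin p) ℝ => (Yᵀ * Y + ε • 1)⁻¹) =
        Ring.inverse ∘ (fun Y : Matrix (Fin n) (Fin p) ℝ => Yᵀ * Y + ε • 1) := by
      funext Y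
      simp [Function.comp, Matrix.nonsing_inv_eq_ringInverse]
    rw [hfun]
    exact h
  refine ⟨_, (hId.matmul hK).matmul hT, fun Δ => ?_⟩
  change X * M⁻¹ * Δᵀ + (X * (-(M⁻¹ * (Xᵀ * Δ + Δᵀ * X) * M⁻¹)) + Δ * M⁻¹) * Xᵀ = _
  simp [ContinuousLinearMap.mulLeftRight_apply, hM, Matrix.mul_add, Matrix.add_mul,
    Matrix.neg_mul, Matrix.mul_neg, Matrix.mul_assoc]

set_option maxHeartbeats 1000000 in
/-- for `ε > 0`, `π_ε` maps into symmetric matrices, is Fréchet differentiable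
at every `X`, and its derivative in direction `Δ` is
`(I − P) Δ K Xᵀ + ((I − P) Δ K Xᵀ)ᵀ` with `K = (XᵀX + εI)⁻¹` and `P = π_ε(X)`. -/
theorem stmt_8 {n p : ℕ} (ε : ℝ) (hε : 0 < ε) (X : Matrix (Fin n) (Fin p) ℝ) :
    (piEps ε X)ᵀ = piEps ε X ∧
    DifferentiableAt ℝ (piEps ε) X ∧
    ∀ Δ : Matrix (Fin n) (Fin p) ℝ,
      fderiv ℝ (piEps ε) X Δ =
        (1 - piEps ε X) * Δ * (Xᵀ * X + ε • (1 : Matrix (Fin p) (Fin p) ℝ))⁻¹ * Xᵀ +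
          ((1 - piEps ε X) * Δ * (Xᵀ * X + ε • (1 : Matrix (Fin p) (Fin p) ℝ))⁻¹ * Xᵀ)ᵀ := by
  have hMsym : (Xᵀ * X + ε • (1 : Matrix (Fin p) (Fin p) ℝ))ᵀ =
      Xᵀ * X + ε • (1 : Matrix (Fin p) (Fin p) ℝ) := by
    simp [Matrix.transpose_add, Matrix.transpose_mul]
  have hKsym : ((Xᵀ * X + ε • (1 : Matrix (Fin p) (Fin p) ℝ))⁻¹)ᵀ =
      (Xᵀ * X + ε • (1 : Matrix (Fin p) (Fin p) ℝ))⁻¹ := by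
    rw [Matrix.transpose_nonsing_inv, hMsym]
  have hsym : (piEps ε X)ᵀ = piEps ε X := by
    simp [piEps, Matrix.transpose_mul, hKsym, Matrix.mul_assoc]
  obtain ⟨D, hD, hDeval⟩ := piEps_hasFDerivAt ε hε X
  refine ⟨hsym, hD.differentiableAt, fun Δ => ?_⟩
  rw [hD.fderiv, hDeval Δ]
  set K := (Xᵀ * X + ε • (1 : Matrix (Fin p) (Fin p) ℝ))⁻¹ with hKdef
  have hP : piEps ε X = X * K * Xᵀ := rfl
  rw [hP]
  simp only [Matrix.transpose_mul, Matrix.transpose_sub, Matrix.transpose_one, hKsym,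
    Matrix.transpose_transpose, Matrix.sub_mul, Matrix.mul_sub, Matrix.one_mul, Matrix.mul_one,
    Matrix.mul_add, Matrix.add_mul, Matrix.mul_neg, Matrix.neg_mul, Matrix.mul_assoc]
  abel
end

section
/- Let U : (−δ, δ) → ℝ^{n×p} and Λ : (−δ, δ) → ℝ^{p×p} be differentiable curves with U(t)ᵀU(t) = I_p and Λ(t) diagonal for all t, and set P(t) = U(t)Λ(t)U(t)ᵀ. Then for any skew-symmetric Z ∈ ℝ^{n×n} satisfying U̇(0) = Z U(0), the derivative of P at t = 0 equals Ṗ(0) = [Z, P(0)] + U(0) Λ̇(0) U(0)ᵀ, where [Z,P] = ZP − PZ; moreover such a skew-symmetric Z always exists. Hence every tangent vector to the spectral manifold M = {UΛUᵀ : UᵀU = I_p, Λ diagonal with entries in [0,1)} at P = UΛUᵀ has the form U Λ̇ Uᵀ + [Z, P] with Λ̇ diagonal and Z skew-symmetric. -/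
open Matrix

attribute [local instance] Matrix.frobeniusNormedAddCommGroup Matrix.frobeniusNormedSpace

section aux

variable {l m q : Type*} [Fintype l] [Fintype m] [Fintype q]
  [DecidableEq l] [DecidableEq m] [DecidableEq q]

lemma isBoundedBilinearMap_matMul :
    IsBoundedBilinearMap ℝ (fun x : Matrix l m ℝ × Matrix m q ℝ => x.1 * x.2) where
  add_left := fun A B C => Matrix.add_mul A B C
  smul_left := fun c A B => Matrix.smul_mul c A B
  add_right := fun A B C => Matrix.mul_add A B C
  smul_right := fun c A B => Matrix.mul_smul A c B
  bound := ⟨1, one_pos, fun A B => by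
    simpa using Matrix.frobenius_norm_mul A B⟩

lemma HasDerivAt.matMul {f : ℝ → Matrix l m ℝ} {g : ℝ → Matrix m q ℝ}
    {f' : Matrix l m ℝ} {g' : Matrix m q ℝ} {t : ℝ}
    (hf : HasDerivAt f f' t) (hg : HasDerivAt g g' t) :
    HasDerivAt (fun s => f s * g s) (f' * g t + f t * g') t := by
  have h := ((isBoundedBilinearMap_matMul (l := l) (m := m) (q := q)).hasFDerivAt
    (f t, g t)).comp_hasDerivAt t (hf.prodMk hg)
  simp [Function.comp_def, add_comm] at h
  exact h

lemma hasDerivAt_transpose {f : ℝ → Matrix l m ℝ} {f' : Matrix l m ℝ} {t : ℝ}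
    (hf : HasDerivAt f f' t) :
    HasDerivAt (fun s => (f s)ᵀ) f'ᵀ t := by
  have h := ((LinearMap.toContinuousLinearMap
      ((Matrix.transposeLinearEquiv l m ℝ ℝ).toLinearMap)).hasFDerivAt.comp_hasDerivAt t hf)
  exact h

lemma hasDerivAt_diagonal {f : ℝ → l → ℝ} {f' : l → ℝ} {t : ℝ}
    (hf : HasDerivAt f f' t) :
    HasDerivAt (fun s => diagonal (f s)) (diagonal f') t := by
  have h := ((LinearMap.toContinuousLinearMap
      (Matrix.diagonalLinearMap l ℝ ℝ)).hasFDerivAt.comp_hasDerivAt t hf)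
  exact h

end aux

/-- for differentiable curves `U(t)` (with `U(t)ᵀU(t) = I`) and diagonal
`Λ(t)` on `(−δ,δ)`, setting `P(t) = U(t)Λ(t)U(t)ᵀ`: there always exists a skew-symmetric
`Z` with `U̇(0) = Z U(0)`, and for any such `Z` the derivative of `P` at `0` is
`Ṗ(0) = [Z, P(0)] + U(0) Λ̇(0) U(0)ᵀ`.  Hence every tangent vector of the spectral
manifold at `P = UΛUᵀ` has the form `UΛ̇Uᵀ + [Z,P]` with `Λ̇` diagonal and `Z` skew. -/
theorem stmt_10 {n p : ℕ} (δ : ℝ) (hδ : 0 < δ)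
    (U : ℝ → Matrix (Fin n) (Fin p) ℝ) (Λ : ℝ → Fin p → ℝ)
    (U' : Matrix (Fin n) (Fin p) ℝ) (Λ' : Fin p → ℝ)
    (hUst : ∀ t ∈ Set.Ioo (-δ) δ, (U t)ᵀ * U t = 1)
    (hUdiff : ∀ t ∈ Set.Ioo (-δ) δ, DifferentiableAt ℝ U t)
    (hΛdiff : ∀ t ∈ Set.Ioo (-δ) δ, DifferentiableAt ℝ Λ t)
    (hU0 : HasDerivAt U U' 0) (hΛ0 : HasDerivAt Λ Λ' 0) :
    (∃ Z : Matrix (Fin n) (Fin n) ℝ, Zᵀ = -Z ∧ U' = Z * U 0) ∧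
    (∀ Z : Matrix (Fin n) (Fin n) ℝ, Zᵀ = -Z → U' = Z * U 0 →
      HasDerivAt (fun t => U t * diagonal (Λ t) * (U t)ᵀ)
        ((Z * (U 0 * diagonal (Λ 0) * (U 0)ᵀ) - (U 0 * diagonal (Λ 0) * (U 0)ᵀ) * Z) +
          U 0 * diagonal Λ' * (U 0)ᵀ) 0) := by
  have h0mem : (0 : ℝ) ∈ Set.Ioo (-δ) δ := ⟨by linarith, hδ⟩
  have hU0st : (U 0)ᵀ * U 0 = 1 := hUst 0 h0mem
  -- derivative of UᵀU is zero
  have hd1 : HasDerivAt (fun t => (U t)ᵀ * U t) (U'ᵀ * U 0 + (U 0)ᵀ * U') 0 :=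
    (hasDerivAt_transpose hU0).matMul hU0
  have hd2 : HasDerivAt (fun t => (U t)ᵀ * U t) 0 0 := by
    have hev : (fun t => (U t)ᵀ * U t) =ᶠ[nhds (0:ℝ)]
        (fun _ => (1 : Matrix (Fin p) (Fin p) ℝ)) := by
      filter_upwards [isOpen_Ioo.mem_nhds h0mem] with t ht using hUst t ht
    exact (hasDerivAt_const (0:ℝ) (1 : Matrix (Fin p) (Fin p) ℝ)).congr_of_eventuallyEq hev
  have hskew : U'ᵀ * U 0 + (U 0)ᵀ * U' = 0 := hd1.unique hd2
  have hskew' : U'ᵀ * U 0 = -((U 0)ᵀ * U') := by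
    have := hskew; linear_combination (norm := (ring_nf; abel)) this
  constructor
  · refine ⟨U' * (U 0)ᵀ - U 0 * U'ᵀ - U 0 * ((U 0)ᵀ * U') * (U 0)ᵀ, ?_, ?_⟩
    · simp only [transpose_sub, transpose_mul, transpose_transpose]
      rw [show U'ᵀ * U 0 * (U 0)ᵀ = -((U 0)ᵀ * U') * (U 0)ᵀ by rw [hskew']]
      simp only [Matrix.neg_mul, Matrix.mul_neg, Matrix.mul_assoc, neg_sub, sub_eq_add_neg,
        neg_neg, neg_add]
      abel
    · rw [Matrix.sub_mul, Matrix.sub_mul, Matrix.mul_assoc U' _ _, hU0st,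
        Matrix.mul_assoc (U 0) U'ᵀ _, Matrix.mul_assoc _ (U 0)ᵀ (U 0), hU0st,
        show U'ᵀ * U 0 = -((U 0)ᵀ * U') from hskew']
      simp [Matrix.mul_assoc, Matrix.mul_neg]
  · intro Z hZ hZU
    have hD : HasDerivAt (fun t => diagonal (Λ t)) (diagonal Λ') 0 := hasDerivAt_diagonal hΛ0
    have h1 : HasDerivAt (fun t => U t * diagonal (Λ t))
        (U' * diagonal (Λ 0) + U 0 * diagonal Λ') 0 := hU0.matMul hD
    have h2 := h1.matMul (hasDerivAt_transpose hU0)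
    convert h2 using 1
    have hZU' : U'ᵀ = -((U 0)ᵀ * Z) := by
      rw [hZU, transpose_mul, hZ]; simp [Matrix.mul_neg]
    rw [hZU', hZU]
    simp only [Matrix.add_mul, Matrix.mul_neg, Matrix.mul_assoc]
    abel
end

section
/- Let y ∈ ℝⁿ and consider f(U, Λ) = ½ Σ_{i=1}^p (1 − λ_i)² (u_iᵀ y)² + ½‖(I_n − UUᵀ)y‖², for U ∈ ℝ^{n×p} with UᵀU = I_p, columns u_i, and Λ = diag(λ₁,…,λ_p) with 0 ≤ λ_i < 1; this equals ½‖(I_n − UΛUᵀ)y‖². Then the partial derivative of f with respect to λ_i equals −(1 − λ_i)(u_iᵀ y)², and the derivative of f along every admissible variation (Λ̇ diagonal, U̇ = Z U with Z skew-symmetric) vanishes if and only if Uᵀ y = 0; in that case P y = 0 for P = UΛUᵀ. -/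
open Matrix

lemma Umul {n p : ℕ} (U : Matrix (Fin n) (Fin p) ℝ) (hU : Uᵀ * U = 1) (x w : Fin p → ℝ) :
    U.mulVec x ⬝ᵥ U.mulVec w = x ⬝ᵥ w := by
  rw [dotProduct_mulVec, ← mulVec_transpose, mulVec_mulVec, hU, one_mulVec]

lemma dotU {n p : ℕ} (U : Matrix (Fin n) (Fin p) ℝ) (y : Fin n → ℝ) (x : Fin p → ℝ) :
    y ⬝ᵥ U.mulVec x = Uᵀ.mulVec y ⬝ᵥ x := by
  rw [dotProduct_mulVec, ← mulVec_transpose]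

lemma col_sum {n p : ℕ} (U : Matrix (Fin n) (Fin p) ℝ) (y : Fin n → ℝ) (i : Fin p) :
    Uᵀ.mulVec y i = ∑ k, U k i * y k := by
  simp [mulVec, dotProduct, transpose_apply]

lemma norm_expand {n p : ℕ} (y : Fin n → ℝ) (U : Matrix (Fin n) (Fin p) ℝ)
    (hU : Uᵀ * U = 1) (d : Fin p → ℝ) :
    ∑ k, ((y - (U * diagonal d * Uᵀ).mulVec y) k)^2 =
      y ⬝ᵥ y - 2 * ∑ i, d i * (Uᵀ.mulVec y i)^2 + ∑ i, (d i)^2 * (Uᵀ.mulVec y i)^2 := by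
  set a := Uᵀ.mulVec y with ha
  set w : Fin p → ℝ := fun i => d i * a i with hw
  have hDa : (diagonal d).mulVec a = w := by
    ext i; simp [mulVec_diagonal, hw]
  have hv : (U * diagonal d * Uᵀ).mulVec y = U.mulVec w := by
    simp only [← mulVec_mulVec, ← ha, hDa]
  have h1 : ∑ k, ((y - (U * diagonal d * Uᵀ).mulVec y) k)^2
      = (y - U.mulVec w) ⬝ᵥ (y - U.mulVec w) := by
    rw [hv]; simp [dotProduct, sq]
  rw [h1, sub_dotProduct, dotProduct_sub, dotProduct_sub, dotU, Umul U hU,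
    dotProduct_comm (U.mulVec _) y, dotU, ← ha]
  have h2 : a ⬝ᵥ w = ∑ i, d i * (a i)^2 := by
    simp only [dotProduct, hw]; apply Finset.sum_congr rfl; intros; ring
  have h3 : w ⬝ᵥ w = ∑ i, (d i)^2 * (a i)^2 := by
    simp only [dotProduct, hw]; apply Finset.sum_congr rfl; intros; ring
  rw [h2, h3]; ring

/-- The decoupled objective
`F(W,μ) = ½ Σᵢ (1−μᵢ)² (wᵢᵀy)² + ½‖(I − WWᵀ)y‖²` (columns `wᵢ` of `W`). -/
noncomputable def vpF {n p : ℕ} (y : Fin n → ℝ) (W : Matrix (Fin n) (Fin p) ℝ)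
    (μ : Fin p → ℝ) : ℝ :=
  (1 / 2) * ∑ i, (1 - μ i) ^ 2 * (∑ k, W k i * y k) ^ 2 +
    (1 / 2) * ∑ k, ((y - (W * Wᵀ).mulVec y) k) ^ 2

set_option maxHeartbeats 1000000 in
/-- for `UᵀU = I` and `Λ = diag(λ)` with `0 ≤ λᵢ < 1`, the objective equals
`½‖(I − UΛUᵀ)y‖²`, its partial derivative in `λᵢ` is `−(1−λᵢ)(uᵢᵀy)²`, and the derivative
along every admissible variation (`Λ̇` diagonal, `U̇ = ZU` with `Z` skew) vanishes iff
`Uᵀy = 0`, in which case `Py = 0` for `P = UΛUᵀ`. -/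
theorem stmt_11 {n p : ℕ} (y : Fin n → ℝ) (U : Matrix (Fin n) (Fin p) ℝ)
    (hU : Uᵀ * U = 1) (lam : Fin p → ℝ) (hlam : ∀ i, 0 ≤ lam i ∧ lam i < 1) :
    vpF y U lam = (1 / 2) * ∑ k, ((y - (U * diagonal lam * Uᵀ).mulVec y) k) ^ 2 ∧
    (∀ i, HasDerivAt (fun s => vpF y U (Function.update lam i s))
      (-(1 - lam i) * (∑ k, U k i * y k) ^ 2) (lam i)) ∧
    ((∀ (Z : Matrix (Fin n) (Fin n) ℝ) (μ' : Fin p → ℝ), Zᵀ = -Z →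
        deriv (fun t : ℝ => vpF y (U + t • (Z * U)) (lam + t • μ')) 0 = 0) ↔
      Uᵀ.mulVec y = 0) ∧
    (Uᵀ.mulVec y = 0 → (U * diagonal lam * Uᵀ).mulVec y = 0) := by
  set a := Uᵀ.mulVec y with ha
  -- Part 1
  have part1 : vpF y U lam
      = (1 / 2) * ∑ k, ((y - (U * diagonal lam * Uᵀ).mulVec y) k) ^ 2 := by
    have hone : U * diagonal (fun _ : Fin p => (1:ℝ)) * Uᵀ = U * Uᵀ := by
      rw [show diagonal (fun _ : Fin p => (1:ℝ)) = 1 from diagonal_one, Matrix.mul_one]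
    have e1 := norm_expand y U hU (fun _ => 1)
    rw [hone] at e1
    have e2 := norm_expand y U hU lam
    unfold vpF
    rw [e1, e2, ← ha]
    have key : ∑ i, (1 - lam i)^2 * (∑ k, U k i * y k)^2
        = ∑ i, (a i)^2 - 2 * ∑ i, lam i * (a i)^2 + ∑ i, (lam i)^2 * (a i)^2 := by
      rw [Finset.mul_sum, ← Finset.sum_sub_distrib, ← Finset.sum_add_distrib]
      apply Finset.sum_congr rfl
      intro i _
      rw [← col_sum U y i, ← ha]
      ring
    rw [key]
    simp only [one_pow, one_mul]
    ring
  -- Part 2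
  have part2 : ∀ i, HasDerivAt (fun s => vpF y U (Function.update lam i s))
      (-(1 - lam i) * (∑ k, U k i * y k) ^ 2) (lam i) := by
    intro i
    have hterm : ∀ j ∈ Finset.univ, HasDerivAt
        (fun s => (1 - Function.update lam i s j)^2 * (∑ k, U k j * y k)^2)
        (if j = i then -2*(1-lam i)*(∑ k, U k i * y k)^2 else 0) (lam i) := by
      intro j _
      by_cases hji : j = i
      · subst hji
        simp only [Function.update_self, if_pos rfl]
        have h := (((hasDerivAt_id (lam j)).const_sub 1).fun_pow 2).mul_const
          ((∑ k, U k j * y k)^2)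
        convert h using 1
        case e'_4 => rfl
        case e'_5 => rfl
        case e'_8 => rfl
        simp only [if_true, id_eq]
        ring
      · simp only [Function.update_of_ne hji, if_neg hji]
        exact hasDerivAt_const _ _
    have hsum := (HasDerivAt.fun_sum hterm).const_mul ((1:ℝ)/2)
    have hfin := hsum.add_const
      ((1 / 2) * ∑ k, ((y - (U * Uᵀ).mulVec y) k) ^ 2)
    have heq : (fun s => vpF y U (Function.update lam i s))
        = fun s => (1/2) * ∑ j, (1 - Function.update lam i s j)^2 * (∑ k, U k j * y k)^2
            + (1 / 2) * ∑ k, ((y - (U * Uᵀ).mulVec y) k) ^ 2 := by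
      funext s; rfl
    rw [heq]
    convert hfin using 1
    case e'_4 => rfl
    case e'_5 => rfl
    simp
    ring
  -- Part 4
  have part4 : Uᵀ.mulVec y = 0 → (U * diagonal lam * Uᵀ).mulVec y = 0 := by
    intro h
    simp only [← mulVec_mulVec]
    rw [h, mulVec_zero, mulVec_zero]
  refine ⟨part1, part2, ?_, part4⟩
  -- Part 3
  constructor
  · -- forward : variations vanish → Uᵀy = 0
    intro H
    ext i
    have hi := H 0 ((Pi.single i (1:ℝ) : Fin p → ℝ)) (by simp)
    simp only [Matrix.zero_mul, smul_zero, add_zero] at hi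
    -- derivative of t ↦ vpF y U (lam + t • (Pi.single i (1:ℝ) : Fin p → ℝ)) at 0
    have hterm : ∀ j ∈ Finset.univ, HasDerivAt
        (fun t : ℝ => (1 - (lam + t • (Pi.single i (1:ℝ) : Fin p → ℝ)) j)^2 * (∑ k, U k j * y k)^2)
        (if j = i then -2*(1-lam i)*(∑ k, U k i * y k)^2 else 0) 0 := by
      intro j _
      by_cases hji : j = i
      · subst hji
        simp only [Pi.add_apply, Pi.smul_apply, Pi.single_eq_same, smul_eq_mul,
          mul_one, if_pos rfl]
        have hlin : HasDerivAt (fun t : ℝ => 1 - (lam j + t)) (-1) 0 := by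
          simpa using ((hasDerivAt_id (0:ℝ)).const_add (lam j)).const_sub 1
        have h := (hlin.fun_pow 2).mul_const ((∑ k, U k j * y k)^2)
        convert h using 1
        case e'_4 => rfl
        case e'_5 => rfl
        simp only [if_true]
        norm_num
      · have hz : (Pi.single i (1:ℝ) : Fin p → ℝ) j = 0 := by simp [Pi.single_eq_of_ne hji]
        simp only [Pi.add_apply, Pi.smul_apply, hz, smul_eq_mul, mul_zero,
          add_zero, if_neg hji]
        exact hasDerivAt_const _ _
    have hsum := (HasDerivAt.fun_sum hterm).const_mul ((1:ℝ)/2)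
    have hfin := hsum.add_const
      ((1 / 2) * ∑ k, ((y - (U * Uᵀ).mulVec y) k) ^ 2)
    have heq : (fun t : ℝ => vpF y U (lam + t • (Pi.single i (1:ℝ) : Fin p → ℝ)))
        = fun t => (1/2) * ∑ j, (1 - (lam + t • (Pi.single i (1:ℝ) : Fin p → ℝ)) j)^2 * (∑ k, U k j * y k)^2
            + (1 / 2) * ∑ k, ((y - (U * Uᵀ).mulVec y) k) ^ 2 := by
      funext t; rfl
    rw [heq] at hi
    rw [hfin.deriv] at hi
    simp only [Finset.sum_ite_eq', Finset.mem_univ, if_true] at hi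
    have h1 : (1 - lam i) * (∑ k, U k i * y k)^2 = 0 := by linarith
    have h2 : (∑ k, U k i * y k)^2 = 0 := by
      have := (hlam i).2
      have hpos : 0 < 1 - lam i := by linarith
      exact (mul_eq_zero.1 h1).resolve_left (by positivity)
    have h3 : (∑ k, U k i * y k) = 0 := by
      exact pow_eq_zero_iff (by norm_num) |>.1 h2
    rw [ha, col_sum, h3]
    rfl
  · -- backward : Uᵀy = 0 → all variational derivatives vanish
    intro h Z μ' _
    set b := (Z * U)ᵀ.mulVec y with hb
    set u := U.mulVec b with hu
    set z := (Z * U).mulVec b with hz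
    -- column sums
    have hcol : ∀ (t : ℝ) (i : Fin p), (∑ k, (U + t • (Z * U)) k i * y k) = t * b i := by
      intro t i
      have h1 : ∑ k, U k i * y k = 0 := by
        rw [← col_sum U y i, ← ha, h]; rfl
      have h2 : b i = ∑ k, (Z * U) k i * y k := by rw [hb, col_sum]
      simp only [Matrix.add_apply, Matrix.smul_apply, smul_eq_mul, add_mul]
      rw [Finset.sum_add_distrib, h1, zero_add, h2, Finset.mul_sum]
      apply Finset.sum_congr rfl; intros; ring
    -- the residual
    have hWy : ∀ t : ℝ, ((U + t • (Z * U)) * (U + t • (Z * U))ᵀ).mulVec y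
        = t • u + (t^2) • z := by
      intro t
      rw [← mulVec_mulVec]
      have h1 : (U + t • (Z * U))ᵀ.mulVec y = t • b := by
        rw [transpose_add, transpose_smul, add_mulVec, smul_mulVec, ← ha, h, ← hb,
          zero_add]
      rw [h1, mulVec_smul, add_mulVec, smul_mulVec, ← hu, ← hz, smul_add,
        smul_smul, ← sq]
    -- explicit form of the objective along the path
    have heq : (fun t : ℝ => vpF y (U + t • (Z * U)) (lam + t • μ'))
        = fun t => (1/2) * ∑ i, (1 - (lam i + t * μ' i))^2 * (t * b i)^2
            + (1/2) * ∑ k, (y k - (t * u k + t^2 * z k))^2 := by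
      funext t
      unfold vpF
      congr 1
      · congr 1
        apply Finset.sum_congr rfl
        intro i _
        rw [hcol t i]
        rfl
      · congr 1
        apply Finset.sum_congr rfl
        intro k _
        rw [show (y - ((U + t • (Z * U)) * (U + t • (Z * U))ᵀ).mulVec y) k
            = y k - (t * u k + t^2 * z k) from by
          rw [Pi.sub_apply, hWy t]; simp [Pi.add_apply, Pi.smul_apply, smul_eq_mul]]
    -- derivative of the first sum is 0
    have hd1 : HasDerivAt (fun t : ℝ => ∑ i, (1 - (lam i + t * μ' i))^2 * (t * b i)^2)
        0 0 := by
      have hterm : ∀ i ∈ Finset.univ, HasDerivAt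
          (fun t : ℝ => (1 - (lam i + t * μ' i))^2 * (t * b i)^2) 0 0 := by
        intro i _
        have hf : HasDerivAt (fun t : ℝ => (1 - (lam i + t * μ' i))^2)
            (2 * (1 - (lam i + 0 * μ' i))^1 * (-(1 * μ' i))) 0 :=
          ((((hasDerivAt_id (0:ℝ)).mul_const (μ' i)).const_add (lam i)).const_sub 1).fun_pow 2
        have hg : HasDerivAt (fun t : ℝ => (t * b i)^2)
            (2 * (0 * b i)^1 * (1 * b i)) 0 :=
          ((hasDerivAt_id (0:ℝ)).mul_const (b i)).fun_pow 2
        have := hf.fun_mul hg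
        convert this using 1
        case e'_4 => rfl
        case e'_5 => rfl
        simp
      have := HasDerivAt.fun_sum hterm
      simpa using this
    -- derivative of the second sum
    have hd2 : HasDerivAt (fun t : ℝ => ∑ k, (y k - (t * u k + t^2 * z k))^2)
        (∑ k, (-2) * y k * u k) 0 := by
      apply HasDerivAt.fun_sum
      intro k _
      have hlin : HasDerivAt (fun t : ℝ => y k - (t * u k + t^2 * z k))
          (-(1 * u k + 2 * 0^1 * z k)) 0 :=
        (((hasDerivAt_id (0:ℝ)).mul_const (u k)).fun_add
          ((hasDerivAt_pow 2 (0:ℝ)).mul_const (z k))).const_sub (y k)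
      have := hlin.fun_pow 2
      convert this using 1
      case e'_4 => rfl
      norm_num
    -- total derivative
    have hsum2 : ∑ k, (-2 : ℝ) * y k * u k = 0 := by
      have : ∑ k, (-2 : ℝ) * y k * u k = -2 * (y ⬝ᵥ u) := by
        rw [dotProduct, Finset.mul_sum]
        apply Finset.sum_congr rfl; intros; ring
      rw [this, hu, dotU, ← ha, h, zero_dotProduct, mul_zero]
    have hfin := (hd1.const_mul ((1:ℝ)/2)).fun_add (hd2.const_mul ((1:ℝ)/2))
    rw [heq]
    rw [hfin.deriv]
    rw [hsum2]
    ring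
end

section
/- Let X ∈ ℝ^{n×p} with XᵀX = I_p, let U ∈ ℝ^{n×p} with UᵀU = I_p and XᵀU = 0, let V ∈ O(p), and let Σ = diag(σ₁,…,σ_p) with σ_i ≥ 0, so that H = UΣVᵀ is a horizontal vector at X (XᵀH = 0). Define Y(t) = X V cos(tΣ) Vᵀ + U sin(tΣ) Vᵀ. Then for all t ∈ ℝ: (i) Y(t)ᵀY(t) = I_p; (ii) Y(t)ᵀ Ẏ(t) = 0, i.e. the velocity is horizontal; (iii) Ÿ(t) = −Y(t) V Σ² Vᵀ, so the Euclidean acceleration lies in the normal space {Y S : S symmetric} to the Stiefel manifold at Y(t); and (iv) Y(0) = X and Ẏ(0) = H. Hence Y is the horizontal geodesic in St(n,p) through X with initial velocity H, and span(Y(t)) is the geodesic on the Grassmannian. -/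
open Matrix

attribute [local instance] Matrix.frobeniusNormedAddCommGroup Matrix.frobeniusNormedSpace

/-- Auxiliary linear map `d ↦ A * diagonal d * B`. -/
noncomputable def stmt15Lmap {n p : ℕ} (A : Matrix (Fin n) (Fin p) ℝ)
    (B : Matrix (Fin p) (Fin p) ℝ) :
    (Fin p → ℝ) →ₗ[ℝ] Matrix (Fin n) (Fin p) ℝ where
  toFun d := A * diagonal d * B
  map_add' d e := by
    show A * diagonal (d + e) * B = A * diagonal d * B + A * diagonal e * B
    rw [show diagonal (d + e) = diagonal d + diagonal e from
      (diagonalAddMonoidHom (Fin p) ℝ).map_add d e, Matrix.mul_add, Matrix.add_mul]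
  map_smul' c d := by
    simp only [RingHom.id_apply]
    rw [show diagonal (c • d) = c • diagonal d from
      (diagonalLinearMap (Fin p) ℝ ℝ).map_smul c d, Matrix.mul_smul, Matrix.smul_mul]

lemma stmt15_hasDerivAt_L {n p : ℕ} (A : Matrix (Fin n) (Fin p) ℝ)
    (B : Matrix (Fin p) (Fin p) ℝ) (f f' : ℝ → Fin p → ℝ) (t : ℝ)
    (hf : ∀ i, HasDerivAt (fun s => f s i) (f' t i) t) :
    HasDerivAt (fun s => A * diagonal (f s) * B) (A * diagonal (f' t) * B) t := by
  have h1 : HasDerivAt f (f' t) t := hasDerivAt_pi.2 hf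
  have h2 := ((stmt15Lmap A B).toContinuousLinearMap.hasFDerivAt (x := f t)).comp_hasDerivAt t h1
  simp [stmt15Lmap, Function.comp] at h2
  exact h2

lemma stmt15_contract {n p : ℕ} (X U : Matrix (Fin n) (Fin p) ℝ)
    (V : Matrix (Fin p) (Fin p) ℝ)
    (hX : Xᵀ * X = 1) (hU : Uᵀ * U = 1) (hXU : Xᵀ * U = 0) (hV : Vᵀ * V = 1)
    (d d' e e' : Fin p → ℝ) :
    (X * V * diagonal d * Vᵀ + U * diagonal d' * Vᵀ)ᵀ *
      (X * V * diagonal e * Vᵀ + U * diagonal e' * Vᵀ) =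
    V * diagonal (fun i => d i * e i + d' i * e' i) * Vᵀ := by
  have hUX : Uᵀ * X = 0 := by
    have := congrArg transpose hXU
    simpa [transpose_mul] using this
  simp only [transpose_add, transpose_mul, diagonal_transpose, Matrix.add_mul, Matrix.mul_add,
    Matrix.mul_assoc]
  have hX' : ∀ M : Matrix (Fin p) (Fin p) ℝ, Xᵀ * (X * M) = M := fun M => by
    rw [← Matrix.mul_assoc, hX, Matrix.one_mul]
  have hU' : ∀ M : Matrix (Fin p) (Fin p) ℝ, Uᵀ * (U * M) = M := fun M => by
    rw [← Matrix.mul_assoc, hU, Matrix.one_mul]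
  have hV' : ∀ M : Matrix (Fin p) (Fin p) ℝ, Vᵀ * (V * M) = M := fun M => by
    rw [← Matrix.mul_assoc, hV, Matrix.one_mul]
  have hXU' : ∀ M : Matrix (Fin p) (Fin p) ℝ, Xᵀ * (U * M) = 0 := fun M => by
    rw [← Matrix.mul_assoc, hXU, Matrix.zero_mul]
  have hUX' : ∀ M : Matrix (Fin p) (Fin p) ℝ, Uᵀ * (X * M) = 0 := fun M => by
    rw [← Matrix.mul_assoc, hUX, Matrix.zero_mul]
  rw [hX', hV', hXU', hUX', hU']
  simp only [Matrix.mul_zero, add_zero, zero_add]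
  rw [← Matrix.mul_assoc (diagonal d), ← Matrix.mul_assoc (diagonal d'),
    diagonal_mul_diagonal, diagonal_mul_diagonal, transpose_transpose,
    ← Matrix.mul_add, ← Matrix.add_mul,
    show (diagonal fun i => d i * e i) + (diagonal fun i => d' i * e' i)
        = diagonal (fun i => d i * e i + d' i * e' i) from
      ((diagonalAddMonoidHom (Fin p) ℝ).map_add _ _).symm]

lemma stmt15_mulN {n p : ℕ} (A : Matrix (Fin n) (Fin p) ℝ)
    (V : Matrix (Fin p) (Fin p) ℝ) (hV : Vᵀ * V = 1) (d e : Fin p → ℝ) :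
    A * diagonal d * Vᵀ * (V * diagonal e * Vᵀ) = A * diagonal (fun i => d i * e i) * Vᵀ := by
  simp only [Matrix.mul_assoc]
  rw [show Vᵀ * (V * (diagonal e * Vᵀ)) = diagonal e * Vᵀ from by
    rw [← Matrix.mul_assoc, hV, Matrix.one_mul]]
  rw [← Matrix.mul_assoc (diagonal d), diagonal_mul_diagonal]

lemma stmt15_negdiag {n p : ℕ} (A : Matrix (Fin n) (Fin p) ℝ)
    (B : Matrix (Fin p) (Fin p) ℝ) (d : Fin p → ℝ) :
    -(A * diagonal d * B) = A * diagonal (fun i => -(d i)) * B := by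
  rw [← diagonal_neg, Matrix.mul_neg, Matrix.neg_mul]

/-- the curve `Y(t) = XV cos(tΣ)Vᵀ + U sin(tΣ)Vᵀ` is the horizontal geodesic
of the Stiefel manifold through `X` with initial velocity `H = UΣVᵀ`: it stays on the
Stiefel manifold, has horizontal velocity, its Euclidean acceleration `−Y(t)VΣ²Vᵀ` lies in
the normal space `{YS : S symmetric}`, and `Y(0) = X`, `Ẏ(0) = H`. -/
theorem stmt_15 {n p : ℕ} (X U : Matrix (Fin n) (Fin p) ℝ) (V : Matrix (Fin p) (Fin p) ℝ)
    (σ : Fin p → ℝ) (hX : Xᵀ * X = 1) (hU : Uᵀ * U = 1) (hXU : Xᵀ * U = 0)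
    (hV : Vᵀ * V = 1) (hσ : ∀ i, 0 ≤ σ i) :
    Xᵀ * (U * diagonal σ * Vᵀ) = 0 ∧
    (∀ t : ℝ,
      HasDerivAt
        (fun s : ℝ => X * V * diagonal (fun i => Real.cos (s * σ i)) * Vᵀ +
          U * diagonal (fun i => Real.sin (s * σ i)) * Vᵀ)
        (X * V * diagonal (fun i => -(σ i) * Real.sin (t * σ i)) * Vᵀ +
          U * diagonal (fun i => σ i * Real.cos (t * σ i)) * Vᵀ) t) ∧
    (∀ t : ℝ,
      (X * V * diagonal (fun i => Real.cos (t * σ i)) * Vᵀ +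
          U * diagonal (fun i => Real.sin (t * σ i)) * Vᵀ)ᵀ *
        (X * V * diagonal (fun i => Real.cos (t * σ i)) * Vᵀ +
          U * diagonal (fun i => Real.sin (t * σ i)) * Vᵀ) = 1) ∧
    (∀ t : ℝ,
      (X * V * diagonal (fun i => Real.cos (t * σ i)) * Vᵀ +
          U * diagonal (fun i => Real.sin (t * σ i)) * Vᵀ)ᵀ *
        (X * V * diagonal (fun i => -(σ i) * Real.sin (t * σ i)) * Vᵀ +
          U * diagonal (fun i => σ i * Real.cos (t * σ i)) * Vᵀ) = 0) ∧
    (∀ t : ℝ,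
      HasDerivAt
        (fun s : ℝ => X * V * diagonal (fun i => -(σ i) * Real.sin (s * σ i)) * Vᵀ +
          U * diagonal (fun i => σ i * Real.cos (s * σ i)) * Vᵀ)
        (-((X * V * diagonal (fun i => Real.cos (t * σ i)) * Vᵀ +
            U * diagonal (fun i => Real.sin (t * σ i)) * Vᵀ) *
          (V * diagonal (fun i => σ i ^ 2) * Vᵀ))) t) ∧
    (∀ t : ℝ, ∃ S : Matrix (Fin p) (Fin p) ℝ, Sᵀ = S ∧
      -((X * V * diagonal (fun i => Real.cos (t * σ i)) * Vᵀ +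
          U * diagonal (fun i => Real.sin (t * σ i)) * Vᵀ) *
        (V * diagonal (fun i => σ i ^ 2) * Vᵀ)) =
      (X * V * diagonal (fun i => Real.cos (t * σ i)) * Vᵀ +
          U * diagonal (fun i => Real.sin (t * σ i)) * Vᵀ) * S) ∧
    (X * V * diagonal (fun i => Real.cos ((0 : ℝ) * σ i)) * Vᵀ +
        U * diagonal (fun i => Real.sin ((0 : ℝ) * σ i)) * Vᵀ = X) ∧
    (X * V * diagonal (fun i => -(σ i) * Real.sin ((0 : ℝ) * σ i)) * Vᵀ +
        U * diagonal (fun i => σ i * Real.cos ((0 : ℝ) * σ i)) * Vᵀ =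
      U * diagonal σ * Vᵀ) := by
  have hVV : V * Vᵀ = 1 := mul_eq_one_comm.mp hV
  refine ⟨?_, ?_, ?_, ?_, ?_, ?_, ?_, ?_⟩
  · rw [← Matrix.mul_assoc, ← Matrix.mul_assoc, hXU, Matrix.zero_mul, Matrix.zero_mul]
  · intro t
    refine (stmt15_hasDerivAt_L (X * V) Vᵀ _ (fun t i => -(σ i) * Real.sin (t * σ i)) t
      fun i => ?_).add (stmt15_hasDerivAt_L U Vᵀ _ (fun t i => σ i * Real.cos (t * σ i)) t
      fun i => ?_)
    · have := (hasDerivAt_mul_const (σ i)).cos (x := t)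
      convert this using 1; ring
    · have := (hasDerivAt_mul_const (σ i)).sin (x := t)
      convert this using 1; ring
  · intro t
    rw [stmt15_contract X U V hX hU hXU hV]
    rw [show (fun i => Real.cos (t * σ i) * Real.cos (t * σ i) +
        Real.sin (t * σ i) * Real.sin (t * σ i)) = fun _ : Fin p => (1 : ℝ) from
      funext fun i => by nlinarith [Real.sin_sq_add_cos_sq (t * σ i)]]
    rw [diagonal_one, Matrix.mul_one, hVV]
  · intro t
    rw [stmt15_contract X U V hX hU hXU hV]
    rw [show (fun i => Real.cos (t * σ i) * (-(σ i) * Real.sin (t * σ i)) +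
        Real.sin (t * σ i) * (σ i * Real.cos (t * σ i))) = fun _ : Fin p => (0 : ℝ) from
      funext fun i => by ring]
    rw [diagonal_zero, Matrix.mul_zero, Matrix.zero_mul]
  · intro t
    have hD : HasDerivAt
        (fun s : ℝ => X * V * diagonal (fun i => -(σ i) * Real.sin (s * σ i)) * Vᵀ +
          U * diagonal (fun i => σ i * Real.cos (s * σ i)) * Vᵀ)
        (X * V * diagonal (fun i => -(Real.cos (t * σ i) * σ i ^ 2)) * Vᵀ +
          U * diagonal (fun i => -(Real.sin (t * σ i) * σ i ^ 2)) * Vᵀ) t := by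
      refine (stmt15_hasDerivAt_L (X * V) Vᵀ _
        (fun t i => -(Real.cos (t * σ i) * σ i ^ 2)) t fun i => ?_).add
        (stmt15_hasDerivAt_L U Vᵀ _
        (fun t i => -(Real.sin (t * σ i) * σ i ^ 2)) t fun i => ?_)
      · have := (((hasDerivAt_mul_const (σ i)).sin (x := t)).const_mul (-(σ i)))
        exact this.congr_deriv (by ring)
      · have := (((hasDerivAt_mul_const (σ i)).cos (x := t)).const_mul (σ i))
        exact this.congr_deriv (by ring)
    convert hD using 1
    rw [Matrix.add_mul, stmt15_mulN (X * V) V hV, stmt15_mulN U V hV, neg_add,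
      stmt15_negdiag, stmt15_negdiag]
  · intro t
    refine ⟨-(V * diagonal (fun i => σ i ^ 2) * Vᵀ), ?_, (Matrix.mul_neg _ _).symm⟩
    rw [transpose_neg, transpose_mul, transpose_mul, diagonal_transpose, transpose_transpose,
      Matrix.mul_assoc]
  · simp only [zero_mul, Real.cos_zero, Real.sin_zero, diagonal_one, diagonal_zero,
      Matrix.mul_one, Matrix.mul_zero, Matrix.zero_mul, add_zero]
    rw [Matrix.mul_assoc, hVV, Matrix.mul_one]
  · simp only [zero_mul, Real.cos_zero, Real.sin_zero, mul_zero, mul_one, neg_mul, neg_zero,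
      diagonal_zero, Matrix.mul_zero, Matrix.zero_mul, zero_add]
end
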